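/- arXiv:2009.14301 — 4 statements merged into one kernel-verified Lean document; each statement's English description precedes it below -/
import Mathlib

section
/- Let α, β > -1 and n ∈ ℕ. For every polynomial f, ∫_{-1}^1 f(x) P_n^{(α,β)}(x) (1-x)^α (1+x)^β dx = (1/(2n)) ∫_{-1}^1 f'(x) P_{n-1}^{(α+1,β+1)}(x) (1-x)^{α+1} (1+x)^{β+1} dx, where n ≥ 1. -/
open MeasureTheory Finset

/-- Generalized binomial coefficient `C(a, m) = a(a-1)⋯(a-m+1)/m!`. -/
noncomputable def gbinom (a : ℝ) (m : ℕ) : ℝ :=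
  (∏ i ∈ Finset.range m, (a - i)) / m.factorial

/-- Jacobi polynomial `P_n^{(α,β)}`. -/
noncomputable def jacobiP (n : ℕ) (α β : ℝ) (x : ℝ) : ℝ :=
  ∑ k ∈ Finset.range (n + 1),
    gbinom (n + α) (n - k) * gbinom (n + β) k * ((x - 1) / 2) ^ k * ((x + 1) / 2) ^ (n - k)

/-- The Beta function. -/
noncomputable def realBeta (x y : ℝ) : ℝ := Real.Gamma x * Real.Gamma y / Real.Gamma (x + y)

/-- Shifted Jacobi polynomial `Q_n^{(α,β)}(t) = P_n^{(α,β)}(2t-1)`. -/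
noncomputable def shiftedJacobiQ (n : ℕ) (α β : ℝ) (t : ℝ) : ℝ := jacobiP n α β (2 * t - 1)

/-- The polynomial `R_n^{(α,β)}`. -/
noncomputable def reprodR (n : ℕ) (α β : ℝ) (t : ℝ) : ℝ :=
  ((-1 : ℝ) ^ n * realBeta (α + 1) (β + 1) / realBeta (α + n + 1) (β + 1)) *
    shiftedJacobiQ n α (β + 1) t

lemma gbinom_succ (a : ℝ) (m : ℕ) :
    ((m : ℝ) + 1) * gbinom a (m + 1) = (a - m) * gbinom a m := by
  have h1 : ((m + 1).factorial : ℝ) = (m + 1) * m.factorial := by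
    rw [Nat.factorial_succ]; push_cast; ring
  rw [gbinom, gbinom, prod_range_succ, h1]
  have h2 : (m.factorial : ℝ) ≠ 0 := Nat.cast_ne_zero.2 m.factorial_ne_zero
  have h3 : ((m : ℝ) + 1) ≠ 0 := by positivity
  field_simp

lemma coeff1' (α : ℝ) (m k : ℕ) (hk : k ≤ m) :
    (α + 1 + (k : ℝ)) * gbinom (((m + 1 : ℕ) : ℝ) + α) (m - k)
      = ((m : ℝ) + 1 - (k : ℝ)) * gbinom (((m + 1 : ℕ) : ℝ) + α) (m + 1 - k) := by
  have h := gbinom_succ (((m + 1 : ℕ) : ℝ) + α) (m - k)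
  rw [Nat.cast_sub hk] at h
  rw [Nat.succ_sub hk, Nat.succ_eq_add_one]
  push_cast at h ⊢
  linear_combination -h

lemma coeff2' (β : ℝ) (m k : ℕ) :
    (β + 1 + (m : ℝ) - (k : ℝ)) * gbinom (((m + 1 : ℕ) : ℝ) + β) k
      = ((k : ℝ) + 1) * gbinom (((m + 1 : ℕ) : ℝ) + β) (k + 1) := by
  have h := gbinom_succ (((m + 1 : ℕ) : ℝ) + β) k
  push_cast at h ⊢
  linear_combination -h

lemma cast_pow_pred (u : ℝ) (k : ℕ) : (k : ℝ) * u ^ (k - 1) * u = (k : ℝ) * u ^ k := by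
  cases k with
  | zero => simp
  | succ j => rw [Nat.succ_sub_one, pow_succ]; ring

lemma term_identity (α β x c : ℝ) (m k : ℕ) (hk : k ≤ m) :
    ((β + 1) * (1 - x) - (α + 1) * (1 + x)) * (c * ((x - 1) / 2) ^ k * ((x + 1) / 2) ^ (m - k))
      + (1 - x ^ 2) * (c * ((k : ℝ) * ((x - 1) / 2) ^ (k - 1) * (1 / 2) * ((x + 1) / 2) ^ (m - k)
          + ((x - 1) / 2) ^ k * (((m - k : ℕ) : ℝ) * ((x + 1) / 2) ^ (m - k - 1) * (1 / 2))))
    = -2 * ((α + 1 + (k : ℝ)) * c * ((x - 1) / 2) ^ k * ((x + 1) / 2) ^ (m + 1 - k))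
      + -2 * ((β + 1 + (m : ℝ) - (k : ℝ)) * c * ((x - 1) / 2) ^ (k + 1) * ((x + 1) / 2) ^ (m - k)) := by
  have e1 : (k : ℝ) * ((x - 1) / 2) ^ (k - 1) * ((x - 1) / 2) = (k : ℝ) * ((x - 1) / 2) ^ k :=
    cast_pow_pred _ k
  have e2 : ((m - k : ℕ) : ℝ) * ((x + 1) / 2) ^ (m - k - 1) * ((x + 1) / 2)
      = ((m - k : ℕ) : ℝ) * ((x + 1) / 2) ^ (m - k) := cast_pow_pred _ (m - k)
  have e4 : ((m - k : ℕ) : ℝ) = (m : ℝ) - k := by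
    have := Nat.cast_sub hk (R := ℝ); simpa using this
  rw [Nat.succ_sub hk, Nat.succ_eq_add_one, e4]
  rw [e4] at e2
  linear_combination (-2 * c * ((x + 1) / 2) ^ (m - k) * ((x + 1) / 2)) * e1
    + (-2 * c * ((x - 1) / 2) ^ k * ((x - 1) / 2)) * e2

noncomputable def jacobiD (n : ℕ) (α β : ℝ) (x : ℝ) : ℝ :=
  ∑ k ∈ Finset.range (n + 1),
    gbinom (n + α) (n - k) * gbinom (n + β) k *
      ((k : ℝ) * ((x - 1) / 2) ^ (k - 1) * (1 / 2) * ((x + 1) / 2) ^ (n - k)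
        + ((x - 1) / 2) ^ k * (((n - k : ℕ) : ℝ) * ((x + 1) / 2) ^ (n - k - 1) * (1 / 2)))

lemma hasDerivAt_jacobiP (n : ℕ) (α β : ℝ) (x : ℝ) :
    HasDerivAt (jacobiP n α β) (jacobiD n α β x) x := by
  unfold jacobiP jacobiD
  apply HasDerivAt.fun_sum
  intro k _
  have hu : HasDerivAt (fun x : ℝ => (x - 1) / 2) (1 / 2) x := by
    simpa using ((hasDerivAt_id x).sub_const 1).div_const 2
  have hv : HasDerivAt (fun x : ℝ => (x + 1) / 2) (1 / 2) x := by
    simpa using ((hasDerivAt_id x).add_const 1).div_const 2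
  have hup : HasDerivAt (fun x : ℝ => ((x - 1) / 2) ^ k)
      ((k : ℝ) * ((x - 1) / 2) ^ (k - 1) * (1 / 2)) x := hu.pow k
  have hvp : HasDerivAt (fun x : ℝ => ((x + 1) / 2) ^ (n - k))
      (((n - k : ℕ) : ℝ) * ((x + 1) / 2) ^ (n - k - 1) * (1 / 2)) x := hv.pow (n - k)
  have := ((hup.mul hvp).const_mul (gbinom (n + α) (n - k) * gbinom (n + β) k))
  simp only [Pi.mul_apply] at this
  convert this using 2
  · rfl
  · ring

lemma key_identity (α β : ℝ) (m : ℕ) (x : ℝ) :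
    ((β + 1) * (1 - x) - (α + 1) * (1 + x)) * jacobiP m (α + 1) (β + 1) x
      + (1 - x ^ 2) * jacobiD m (α + 1) (β + 1) x
    = -(2 * ((m : ℝ) + 1)) * jacobiP (m + 1) α β x := by
  have hga : gbinom ((m : ℝ) + (α + 1)) = gbinom (((m + 1 : ℕ) : ℝ) + α) := by
    congr 1; push_cast; ring
  have hgb : gbinom ((m : ℝ) + (β + 1)) = gbinom (((m + 1 : ℕ) : ℝ) + β) := by
    congr 1; push_cast; ring
  have hL : ((β + 1) * (1 - x) - (α + 1) * (1 + x)) * jacobiP m (α + 1) (β + 1) x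
      + (1 - x ^ 2) * jacobiD m (α + 1) (β + 1) x
      = ∑ k ∈ range (m + 1),
          (-2 * (((m : ℝ) + 1 - (k : ℝ)) * gbinom (((m + 1 : ℕ) : ℝ) + α) (m + 1 - k)
              * gbinom (((m + 1 : ℕ) : ℝ) + β) k * ((x - 1) / 2) ^ k * ((x + 1) / 2) ^ (m + 1 - k))
            + -2 * (((k : ℝ) + 1) * gbinom (((m + 1 : ℕ) : ℝ) + α) (m - k)
              * gbinom (((m + 1 : ℕ) : ℝ) + β) (k + 1) * ((x - 1) / 2) ^ (k + 1) * ((x + 1) / 2) ^ (m - k))) := by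
    unfold jacobiP jacobiD
    rw [Finset.mul_sum, Finset.mul_sum, ← Finset.sum_add_distrib]
    refine Finset.sum_congr rfl fun k hk => ?_
    have hkm : k ≤ m := Nat.lt_succ_iff.mp (Finset.mem_range.mp hk)
    rw [hga, hgb]
    rw [term_identity α β x (gbinom (((m + 1 : ℕ) : ℝ) + α) (m - k) * gbinom (((m + 1 : ℕ) : ℝ) + β) k) m k hkm]
    have c1 := coeff1' α m k hkm
    have c2 := coeff2' β m k
    linear_combination (-2 * gbinom (((m + 1 : ℕ) : ℝ) + β) k * ((x - 1) / 2) ^ k * ((x + 1) / 2) ^ (m + 1 - k)) * c1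
      + (-2 * gbinom (((m + 1 : ℕ) : ℝ) + α) (m - k) * ((x - 1) / 2) ^ (k + 1) * ((x + 1) / 2) ^ (m - k)) * c2
  have hR : -(2 * ((m : ℝ) + 1)) * jacobiP (m + 1) α β x
      = ∑ k ∈ range (m + 1),
          (-2 * (((m : ℝ) + 1 - (k : ℝ)) * gbinom (((m + 1 : ℕ) : ℝ) + α) (m + 1 - k)
              * gbinom (((m + 1 : ℕ) : ℝ) + β) k * ((x - 1) / 2) ^ k * ((x + 1) / 2) ^ (m + 1 - k))
            + -2 * (((k : ℝ) + 1) * gbinom (((m + 1 : ℕ) : ℝ) + α) (m - k)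
              * gbinom (((m + 1 : ℕ) : ℝ) + β) (k + 1) * ((x - 1) / 2) ^ (k + 1) * ((x + 1) / 2) ^ (m - k))) := by
    unfold jacobiP
    rw [Finset.mul_sum]
    rw [Finset.sum_congr rfl (fun k (hk : k ∈ range (m + 1 + 1)) =>
      (by ring :
        -(2 * ((m : ℝ) + 1)) * (gbinom (((m + 1 : ℕ) : ℝ) + α) (m + 1 - k) * gbinom (((m + 1 : ℕ) : ℝ) + β) k
            * ((x - 1) / 2) ^ k * ((x + 1) / 2) ^ (m + 1 - k))
          = -2 * (((m : ℝ) + 1 - (k : ℝ)) * gbinom (((m + 1 : ℕ) : ℝ) + α) (m + 1 - k)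
              * gbinom (((m + 1 : ℕ) : ℝ) + β) k * ((x - 1) / 2) ^ k * ((x + 1) / 2) ^ (m + 1 - k))
            + -2 * ((k : ℝ) * gbinom (((m + 1 : ℕ) : ℝ) + α) (m + 1 - k)
              * gbinom (((m + 1 : ℕ) : ℝ) + β) k * ((x - 1) / 2) ^ k * ((x + 1) / 2) ^ (m + 1 - k)))),
      Finset.sum_add_distrib]
    rw [Finset.sum_add_distrib]
    congr 1
    · rw [Finset.sum_range_succ]
      push_cast
      ring
    · rw [Finset.sum_range_succ']
      push_cast [Nat.succ_sub_succ]
      simp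
  rw [hL, hR]

open Set in
lemma continuous_jacobiP (n : ℕ) (α β : ℝ) : Continuous (jacobiP n α β) := by
  unfold jacobiP; fun_prop

lemma cont_one_sub_rpow (p : ℝ) (hp : 0 < p) : Continuous (fun x : ℝ => (1 - x) ^ p) := by
  rw [continuous_iff_continuousAt]
  intro x
  exact (Real.continuousAt_rpow_const _ _ (Or.inr hp.le)).comp
    (by fun_prop : ContinuousAt (fun x : ℝ => 1 - x) x)

lemma cont_one_add_rpow (p : ℝ) (hp : 0 < p) : Continuous (fun x : ℝ => (1 + x) ^ p) := by
  rw [continuous_iff_continuousAt]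
  intro x
  exact (Real.continuousAt_rpow_const _ _ (Or.inr hp.le)).comp
    (by fun_prop : ContinuousAt (fun x : ℝ => 1 + x) x)

lemma contOn_one_sub_rpow (p : ℝ) (s : Set ℝ) (hs : ∀ x ∈ s, x < 1) :
    ContinuousOn (fun x : ℝ => (1 - x) ^ p) s := by
  intro x hx
  refine ContinuousAt.continuousWithinAt ?_
  exact (Real.continuousAt_rpow_const _ _ (Or.inl (by have := hs x hx; intro h; linarith))).comp
    (by fun_prop : ContinuousAt (fun x : ℝ => 1 - x) x)

lemma contOn_one_add_rpow (p : ℝ) (s : Set ℝ) (hs : ∀ x ∈ s, -1 < x) :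
    ContinuousOn (fun x : ℝ => (1 + x) ^ p) s := by
  intro x hx
  refine ContinuousAt.continuousWithinAt ?_
  exact (Real.continuousAt_rpow_const _ _ (Or.inl (by have := hs x hx; intro h; linarith))).comp
    (by fun_prop : ContinuousAt (fun x : ℝ => 1 + x) x)

lemma II_one_add (β : ℝ) (hβ : -1 < β) :
    IntervalIntegrable (fun x : ℝ => (1 + x) ^ β) volume (-1) 0 := by
  have h := intervalIntegral.intervalIntegrable_rpow' (a := 0) (b := 1) hβ
  have h2 := h.comp_add_right 1
  norm_num at h2
  convert h2 using 2 with x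
  ring_nf

lemma II_one_sub (α : ℝ) (hα : -1 < α) :
    IntervalIntegrable (fun x : ℝ => (1 - x) ^ α) volume 0 1 := by
  have h := intervalIntegral.intervalIntegrable_rpow' (a := 0) (b := 1) hα
  have h2 := (h.comp_sub_left 1).symm
  norm_num at h2
  exact h2

open Set in
lemma II_weight (α β : ℝ) (hα : -1 < α) (hβ : -1 < β) (c : ℝ → ℝ) (hc : Continuous c) :
    IntervalIntegrable (fun x : ℝ => c x * ((1 - x) ^ α * (1 + x) ^ β)) volume (-1) 1 := by
  apply IntervalIntegrable.trans (b := 0)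
  · have h := (II_one_add β hβ).continuousOn_mul
      (g := fun x : ℝ => c x * (1 - x) ^ α)
      (hc.continuousOn.mul (contOn_one_sub_rpow α _ (fun x hx => by
        rw [Set.uIcc_of_le (by norm_num : (-1:ℝ) ≤ 0)] at hx
        have := hx.2; linarith)))
    have e : (fun x : ℝ => (c x * (1 - x) ^ α) * (1 + x) ^ β)
        = fun x : ℝ => c x * ((1 - x) ^ α * (1 + x) ^ β) := by funext x; ring
    rwa [e] at h
  · have h := (II_one_sub α hα).continuousOn_mul
      (g := fun x : ℝ => c x * (1 + x) ^ β)
      (hc.continuousOn.mul (contOn_one_add_rpow β _ (fun x hx => by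
        rw [Set.uIcc_of_le (by norm_num : (0:ℝ) ≤ 1)] at hx
        have := hx.1; linarith)))
    have e : (fun x : ℝ => (c x * (1 + x) ^ β) * (1 - x) ^ α)
        = fun x : ℝ => c x * ((1 - x) ^ α * (1 + x) ^ β) := by funext x; ring
    rwa [e] at h

lemma hasDerivAt_one_sub_rpow (p x : ℝ) (hx : x < 1) :
    HasDerivAt (fun x : ℝ => (1 - x) ^ p) (-(p * (1 - x) ^ (p - 1))) x := by
  have h1 : HasDerivAt (fun x : ℝ => 1 - x) (-1) x := by
    simpa using (hasDerivAt_id x).const_sub 1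
  have := (Real.hasDerivAt_rpow_const (x := 1 - x) (p := p) (Or.inl (by linarith))).comp x h1
  simpa [Function.comp_def] using this

lemma hasDerivAt_one_add_rpow (p x : ℝ) (hx : -1 < x) :
    HasDerivAt (fun x : ℝ => (1 + x) ^ p) (p * (1 + x) ^ (p - 1)) x := by
  have h1 : HasDerivAt (fun x : ℝ => 1 + x) (1) x := by
    simpa using (hasDerivAt_id x).const_add 1
  have := (Real.hasDerivAt_rpow_const (x := 1 + x) (p := p) (Or.inl (by linarith))).comp x h1
  simpa [Function.comp_def] using this

open Set in
lemma hasDerivAt_w (α β : ℝ) (m : ℕ) (x : ℝ) (hx : x ∈ Ioo (-1 : ℝ) 1) :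
    HasDerivAt (fun x : ℝ => (1 - x) ^ (α + 1) * (1 + x) ^ (β + 1) * jacobiP m (α + 1) (β + 1) x)
      (-(2 * ((m : ℝ) + 1)) * ((1 - x) ^ α * (1 + x) ^ β * jacobiP (m + 1) α β x)) x := by
  obtain ⟨hx1, hx2⟩ := hx
  have h1 := hasDerivAt_one_sub_rpow (α + 1) x hx2
  have h2 := hasDerivAt_one_add_rpow (β + 1) x hx1
  have hP := hasDerivAt_jacobiP m (α + 1) (β + 1) x
  have total := (h1.mul h2).mul hP
  convert total using 1
  · rfl
  · rfl
  · rfl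
  have e1 : (1 - x) ^ (α + 1) = (1 - x) ^ α * (1 - x) :=
    Real.rpow_add_one (by intro h; rw [sub_eq_zero] at h; exact absurd h.symm hx2.ne) α
  have e2 : (1 + x) ^ (β + 1) = (1 + x) ^ β * (1 + x) := by
    have : (1 + x) ≠ 0 := by intro h; nlinarith [hx1]
    exact Real.rpow_add_one this β
  have e3 : (1 - x) ^ (α + 1 - 1) = (1 - x) ^ α := by norm_num
  have e4 : (1 + x) ^ (β + 1 - 1) = (1 + x) ^ β := by norm_num
  simp only [Pi.mul_apply]
  rw [e3, e4, e1, e2]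
  have KI := key_identity α β m x
  linear_combination (-((1 - x) ^ α * (1 + x) ^ β)) * KI

/-- Integration-by-parts identity for Jacobi polynomials. -/
theorem jacobiP_inner_product_reduction (α β : ℝ) (hα : -1 < α) (hβ : -1 < β)
    (n : ℕ) (hn : 1 ≤ n) (f : Polynomial ℝ) :
    ∫ x in (-1 : ℝ)..1, f.eval x * jacobiP n α β x * (1 - x) ^ α * (1 + x) ^ β
      = (1 / (2 * n)) *
        ∫ x in (-1 : ℝ)..1, (Polynomial.derivative f).eval x * jacobiP (n - 1) (α + 1) (β + 1) x *
          (1 - x) ^ (α + 1) * (1 + x) ^ (β + 1) := by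
  obtain ⟨m, rfl⟩ : ∃ m, n = m + 1 := ⟨n - 1, (Nat.succ_pred_eq_of_pos hn).symm⟩
  simp only [Nat.add_sub_cancel]
  set w : ℝ → ℝ := fun x => (1 - x) ^ (α + 1) * (1 + x) ^ (β + 1) * jacobiP m (α + 1) (β + 1) x
    with hw
  set W : ℝ → ℝ := fun x => -(2 * ((m : ℝ) + 1)) * ((1 - x) ^ α * (1 + x) ^ β * jacobiP (m + 1) α β x)
    with hW
  have hw_cont : Continuous w :=
    ((cont_one_sub_rpow _ (by linarith)).mul (cont_one_add_rpow _ (by linarith))).mul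
      (continuous_jacobiP _ _ _)
  have hGcont : ContinuousOn (fun x => f.eval x * w x) (Set.Icc (-1) 1) :=
    (f.continuous.mul hw_cont).continuousOn
  have hderiv : ∀ x ∈ Set.Ioo (-1 : ℝ) 1,
      HasDerivWithinAt (fun x => f.eval x * w x)
        ((Polynomial.derivative f).eval x * w x + f.eval x * W x) (Set.Ioi x) x := fun x hx =>
    ((f.hasDerivAt x).mul (hasDerivAt_w α β m x hx)).hasDerivWithinAt
  have hint1 : IntervalIntegrable (fun x => (Polynomial.derivative f).eval x * w x)
      volume (-1) 1 :=
    ((Polynomial.derivative f).continuous.mul hw_cont).intervalIntegrable _ _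
  have hint2 : IntervalIntegrable (fun x => f.eval x * W x) volume (-1) 1 := by
    have h := II_weight α β hα hβ
      (fun x => f.eval x * (-(2 * ((m : ℝ) + 1)) * jacobiP (m + 1) α β x))
      (f.continuous.mul (continuous_const.mul (continuous_jacobiP _ _ _)))
    have e : (fun x : ℝ => (f.eval x * (-(2 * ((m : ℝ) + 1)) * jacobiP (m + 1) α β x))
          * ((1 - x) ^ α * (1 + x) ^ β)) = fun x => f.eval x * W x := by
      funext x; rw [hW]; ring
    rwa [e] at h
  have hibp := intervalIntegral.integral_eq_sub_of_hasDeriv_right_of_le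
    (by norm_num : (-1 : ℝ) ≤ 1) hGcont hderiv (hint1.add hint2)
  have hb1 : w 1 = 0 := by
    rw [hw]; simp only []
    have : ((1 : ℝ) - 1) ^ (α + 1) = 0 := by
      rw [sub_self, Real.zero_rpow (by linarith)]
    rw [this]; ring
  have hb2 : w (-1) = 0 := by
    rw [hw]; simp only []
    have : ((1 : ℝ) + -1) ^ (β + 1) = 0 := by
      rw [add_neg_cancel, Real.zero_rpow (by linarith)]
    rw [this]; ring
  rw [intervalIntegral.integral_add hint1 hint2, hb1, hb2, mul_zero, mul_zero, sub_zero] at hibp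
  have eL : (fun x : ℝ => f.eval x * W x)
      = fun x => -(2 * ((m : ℝ) + 1)) *
          (f.eval x * jacobiP (m + 1) α β x * (1 - x) ^ α * (1 + x) ^ β) := by
    funext x; rw [hW]; ring
  have eR : (fun x : ℝ => (Polynomial.derivative f).eval x * w x)
      = fun x => (Polynomial.derivative f).eval x * jacobiP m (α + 1) (β + 1) x *
          (1 - x) ^ (α + 1) * (1 + x) ^ (β + 1) := by
    funext x; rw [hw]; ring
  rw [eL, eR, intervalIntegral.integral_const_mul] at hibp
  have hpos : (0 : ℝ) < 2 * ((m : ℝ) + 1) := by positivity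
  have hcast : ((m + 1 : ℕ) : ℝ) = (m : ℝ) + 1 := by push_cast; ring
  rw [hcast]
  field_simp
  linarith [hibp]
end

section
/- Let α > -1, β > 0, and n ∈ ℕ. Then ∫_{-1}^1 P_n^{(α,β+1)}(x) (1-x)^α (1+x)^β dx = 2^{α+β+1} (-1)^n B(α+n+1, β+1), where B is the Beta function. -/
set_option maxHeartbeats 1000000


open MeasureTheory Finset

private lemma gamma_prod (x : ℝ) (hx : 0 < x) (m : ℕ) :
    Real.Gamma (x + m) = Real.Gamma x * ∏ i ∈ range m, (x + i) := by
  induction m with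
  | zero => simp
  | succ m ih =>
    rw [prod_range_succ, ← mul_assoc, ← ih]
    have h1 : (x + (m + 1 : ℕ) : ℝ) = (x + m) + 1 := by push_cast; ring
    rw [h1, Real.Gamma_add_one (by positivity)]
    ring

private lemma prod_desc (x : ℝ) (hx : 0 < x) (m : ℕ) :
    ∏ i ∈ range m, (x + m - 1 - i) = Real.Gamma (x + m) / Real.Gamma x := by
  induction m with
  | zero => simp [div_self (Real.Gamma_pos_of_pos hx).ne']
  | succ m ih =>
    rw [prod_range_succ']
    have h2 : ∀ i ∈ range m, (x + (m + 1 : ℕ) - 1 - ((i : ℕ) + 1 : ℕ) : ℝ) = x + m - 1 - i := by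
      intro i _; push_cast; ring
    rw [prod_congr rfl h2, ih]
    have h3 : (x + (m + 1 : ℕ) : ℝ) = (x + m) + 1 := by push_cast; ring
    have h4 : (x + (m + 1 : ℕ) - 1 - (0 : ℕ) : ℝ) = x + m := by push_cast; ring
    rw [h4, h3, Real.Gamma_add_one (by positivity)]
    ring

private lemma ofReal_integrand {p q : ℝ} :
    ∀ t ∈ Set.uIcc (0:ℝ) 1,
      ((t:ℂ) ^ ((p:ℂ) - 1) * (1 - (t:ℂ)) ^ ((q:ℂ) - 1))
        = ((t ^ (p - 1) * (1 - t) ^ (q - 1) : ℝ) : ℂ) := by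
  intro t ht
  rw [Set.uIcc_of_le (by norm_num : (0:ℝ) ≤ 1)] at ht
  have e1 : ((t:ℂ)) ^ ((p:ℂ) - 1) = ((t ^ (p-1) : ℝ) : ℂ) := by
    rw [Complex.ofReal_cpow ht.1]; norm_cast
  have e2 : (1 - (t:ℂ)) ^ ((q:ℂ) - 1) = (((1 - t) ^ (q-1) : ℝ) : ℂ) := by
    rw [show (1 - (t:ℂ)) = (((1 - t : ℝ)) : ℂ) by push_cast; ring,
      Complex.ofReal_cpow (by linarith [ht.2])]
    norm_cast
  rw [e1, e2, Complex.ofReal_mul]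

private lemma beta_integrable {p q : ℝ} (hp : 0 < p) (hq : 0 < q) :
    IntervalIntegrable (fun t : ℝ => t ^ (p - 1) * (1 - t) ^ (q - 1)) volume 0 1 := by
  have hc := Complex.betaIntegral_convergent (u := (p:ℂ)) (v := (q:ℂ))
    (by simpa using hp) (by simpa using hq)
  have h2 : IntervalIntegrable
      (fun t : ℝ => ((t ^ (p - 1) * (1 - t) ^ (q - 1) : ℝ) : ℂ)) volume 0 1 := by
    refine hc.congr ?_
    intro t ht
    exact ofReal_integrand t (Set.uIoc_subset_uIcc ht)
  have h3 := h2.def'.re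
  rw [intervalIntegrable_iff]
  refine h3.congr (Filter.Eventually.of_forall fun t => ?_)
  simp

private lemma beta_eval {p q : ℝ} (hp : 0 < p) (hq : 0 < q) :
    ∫ t in (0:ℝ)..1, t ^ (p - 1) * (1 - t) ^ (q - 1) = realBeta p q := by
  have hB : Complex.betaIntegral p q
      = ((∫ t in (0:ℝ)..1, t ^ (p - 1) * (1 - t) ^ (q - 1) : ℝ) : ℂ) := by
    rw [Complex.betaIntegral, ← intervalIntegral.integral_ofReal]
    exact intervalIntegral.integral_congr ofReal_integrand
  have hG := Complex.Gamma_mul_Gamma_eq_betaIntegral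
    (s := (p:ℂ)) (t := (q:ℂ)) (by simpa using hp) (by simpa using hq)
  rw [hB] at hG
  have hpq : ((p:ℂ) + q) = ((p + q : ℝ) : ℂ) := by push_cast; ring
  rw [hpq, Complex.Gamma_ofReal, Complex.Gamma_ofReal, Complex.Gamma_ofReal] at hG
  have hG' : Real.Gamma p * Real.Gamma q
      = Real.Gamma (p + q) * ∫ t in (0:ℝ)..1, t ^ (p - 1) * (1 - t) ^ (q - 1) := by
    exact_mod_cast hG
  have hne := (Real.Gamma_pos_of_pos (show (0:ℝ) < p + q by linarith)).ne'
  rw [realBeta, hG']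
  field_simp

private lemma sum_step (n : ℕ) (x : ℝ) :
    ∑ j ∈ range (n+2), (-1:ℝ)^j * ((n+1).choose j) / (x + j)
      = (∑ j ∈ range (n+1), (-1:ℝ)^j * (n.choose j) / (x + j))
        - ∑ j ∈ range (n+1), (-1:ℝ)^j * (n.choose j) / (x + 1 + j) := by
  have key : ∀ i ∈ range (n+1),
      (-1:ℝ)^(i+1) * (((n+1).choose (i+1) : ℕ)) / (x + ((i:ℕ)+1:ℕ))
        = (-1:ℝ)^(i+1) * ((n.choose (i+1) : ℕ)) / (x + ((i+1:ℕ)))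
          - (-1:ℝ)^i * (n.choose i) / (x + 1 + i) := by
    intro i _
    rw [Nat.choose_succ_succ]
    push_cast
    have hne : x + ((i:ℝ)+1) ≠ x + 1 + i ∨ True := Or.inr trivial
    ring
  rw [Finset.sum_range_succ' _ (n+1), Finset.sum_congr rfl key, Finset.sum_sub_distrib,
    Finset.sum_range_succ' (fun j => (-1:ℝ)^j * (n.choose j) / (x + j)) n,
    Finset.sum_range_succ (fun i => (-1:ℝ)^(i+1) * ((n.choose (i+1):ℕ)) / (x + ((i+1:ℕ)))) n]
  simp [Nat.choose_succ_self]
  ring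

private lemma sum_identity (n : ℕ) : ∀ x : ℝ, 0 < x →
    ∑ j ∈ range (n+1), (-1:ℝ)^j * (n.choose j) / (x + j)
      = n.factorial / ∏ j ∈ range (n+1), (x + j) := by
  induction n with
  | zero => intro x hx; simp
  | succ n ih =>
    intro x hx
    have hP : (0:ℝ) < ∏ j ∈ range (n+1), (x + j) :=
      prod_pos fun j _ => by positivity
    have hQ : (0:ℝ) < ∏ j ∈ range (n+1), (x + 1 + j) :=
      prod_pos fun j _ => by positivity
    rw [show n+1+1 = n+2 from rfl, sum_step, ih x hx, ih (x+1) (by linarith)]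
    have e1 : ∏ j ∈ range (n+2), (x+j) = (∏ j ∈ range (n+1), (x+j)) * (x+(n+1)) := by
      rw [prod_range_succ]; push_cast; ring_nf
    have e2 : ∏ j ∈ range (n+2), (x+j) = (∏ j ∈ range (n+1), (x+1+j)) * x := by
      rw [prod_range_succ']
      congr 1
      · apply prod_congr rfl; intro i _; push_cast; ring
      · norm_num
    have hRpos : (0:ℝ) < ∏ j ∈ range (n+2), (x+j) := prod_pos fun j _ => by positivity
    have e3 : (∏ j ∈ range (n+1), (x+j)) * (x+(n+1))
        = (∏ j ∈ range (n+1), (x+1+j)) * x := e1.symm.trans e2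
    have goalQ : ∑' _ : Empty, (0:ℝ) = 0 := by simp
    rw [show ∏ j ∈ range (n+1+1), (x+j) = (∏ j ∈ range (n+1), (x+1+j)) * x from e2]
    rw [div_sub_div _ _ hP.ne' hQ.ne', div_eq_div_iff (by positivity) (by positivity)]
    push_cast [Nat.factorial_succ]
    linear_combination (-(n.factorial : ℝ) * ∏ j ∈ range (n+1), (x+1+j)) * e3


private lemma beta_integrable' {a b : ℝ} (ha : -1 < a) (hb : -1 < b) :
    IntervalIntegrable (fun t : ℝ => (1-t) ^ a * t ^ b) volume 0 1 := by
  have h := beta_integrable (p := b+1) (q := a+1) (by linarith) (by linarith)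
  simp only [add_sub_cancel_right] at h
  exact h.congr (fun t _ => mul_comm _ _)

private lemma beta_eval' {a b : ℝ} (ha : -1 < a) (hb : -1 < b) :
    ∫ t in (0:ℝ)..1, (1-t)^a * t^b = realBeta (b+1) (a+1) := by
  have h := beta_eval (p := b+1) (q := a+1) (by linarith) (by linarith)
  simp only [add_sub_cancel_right] at h
  rw [← h]
  exact intervalIntegral.integral_congr fun t _ => mul_comm _ _

private lemma key_sum (α β : ℝ) (hα : -1 < α) (hβ : 0 < β) (n : ℕ) :
    ∑ k ∈ range (n+1), gbinom (n + α) (n-k) * gbinom (n + (β+1)) k * (-1:ℝ)^k *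
        realBeta (β + ((n-k : ℕ) : ℝ) + 1) (α + k + 1)
      = (-1:ℝ)^n * realBeta (α + n + 1) (β + 1) := by
  have hn0 : (0:ℝ) ≤ n := Nat.cast_nonneg n
  have hterm : ∀ k ∈ range (n+1),
      gbinom (n + α) (n-k) * gbinom (n + (β+1)) k * (-1:ℝ)^k *
          realBeta (β + ((n-k : ℕ) : ℝ) + 1) (α + k + 1)
        = (Real.Gamma (α+n+1) * Real.Gamma (β+n+2) / Real.Gamma (α+β+n+2)) *
            ((-1:ℝ)^k / (((n-k).factorial : ℝ) * (k.factorial : ℝ) * (β + ((n-k:ℕ):ℝ) + 1))) := by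
    intro k hk
    have hkn : k ≤ n := Nat.lt_succ_iff.mp (mem_range.mp hk)
    have hk0 : (0:ℝ) ≤ k := Nat.cast_nonneg k
    have hcast : ((n-k : ℕ) : ℝ) = (n:ℝ) - k := Nat.cast_sub hkn
    have hkn' : (k:ℝ) ≤ n := by exact_mod_cast hkn
    have hp1 : (0:ℝ) < α + k + 1 := by linarith
    have hp2 : (0:ℝ) < β + ((n-k:ℕ):ℝ) + 2 := by rw [hcast]; linarith
    have hp4 : (0:ℝ) < β + ((n-k:ℕ):ℝ) + 1 := by rw [hcast]; linarith
    have e1 : gbinom (n + α) (n-k)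
        = Real.Gamma (α+n+1) / Real.Gamma (α+k+1) / ((n-k).factorial : ℝ) := by
      rw [gbinom,
        show (∏ i ∈ range (n-k), ((n:ℝ) + α - i))
          = ∏ i ∈ range (n-k), (α+(k:ℝ)+1 + ((n-k:ℕ):ℝ) - 1 - i) from
          prod_congr rfl fun i _ => by rw [hcast]; ring,
        prod_desc (α+(k:ℝ)+1) hp1 (n-k),
        show α+(k:ℝ)+1+((n-k:ℕ):ℝ) = α+(n:ℝ)+1 by rw [hcast]; ring]
    have e2 : gbinom (n + (β+1)) k
        = Real.Gamma (β+n+2) / Real.Gamma (β+((n-k:ℕ):ℝ)+2) / (k.factorial : ℝ) := by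
      rw [gbinom,
        show (∏ i ∈ range k, ((n:ℝ) + (β+1) - i))
          = ∏ i ∈ range k, (β+((n-k:ℕ):ℝ)+2 + (k:ℝ) - 1 - i) from
          prod_congr rfl fun i _ => by rw [hcast]; ring,
        prod_desc (β+((n-k:ℕ):ℝ)+2) hp2 k,
        show β+((n-k:ℕ):ℝ)+2+(k:ℝ) = β+(n:ℝ)+2 by rw [hcast]; ring]
    have e3 : Real.Gamma (β+((n-k:ℕ):ℝ)+2)
        = (β+((n-k:ℕ):ℝ)+1) * Real.Gamma (β+((n-k:ℕ):ℝ)+1) := by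
      rw [show β+((n-k:ℕ):ℝ)+2 = (β+((n-k:ℕ):ℝ)+1)+1 by ring,
        Real.Gamma_add_one hp4.ne']
    have e4 : realBeta (β + ((n-k:ℕ):ℝ) + 1) (α + k + 1)
        = Real.Gamma (β+((n-k:ℕ):ℝ)+1) * Real.Gamma (α+k+1) / Real.Gamma (α+β+n+2) := by
      rw [realBeta, show (β+((n-k:ℕ):ℝ)+1)+(α+(k:ℝ)+1) = α+β+(n:ℝ)+2 by rw [hcast]; ring]
    have hne1 := (Real.Gamma_pos_of_pos hp1).ne'
    have hne2 := (Real.Gamma_pos_of_pos hp4).ne'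
    have hne3 := (Real.Gamma_pos_of_pos (show (0:ℝ) < α+β+n+2 by linarith)).ne'
    have hne5 : ((n-k).factorial : ℝ) ≠ 0 := Nat.cast_ne_zero.mpr (n-k).factorial_ne_zero
    have hne6 : ((k).factorial : ℝ) ≠ 0 := Nat.cast_ne_zero.mpr k.factorial_ne_zero
    rw [e1, e2, e3, e4]
    have habs : ∀ (GA GB GG Gk Gc F1 F2 c s : ℝ), Gk ≠ 0 → Gc ≠ 0 → GG ≠ 0 →
        F1 ≠ 0 → F2 ≠ 0 → c ≠ 0 →
        GA / Gk / F1 * (GB / (c * Gc) / F2) * s * (Gc * Gk / GG)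
          = GA * GB / GG * (s / (F1 * F2 * c)) := by
      intros GA GB GG Gk Gc F1 F2 c s h1 h2 h3 h4 h5 h6
      field_simp
    exact habs _ _ _ _ _ _ _ _ _ hne1 hne2 hne3 hne5 hne6 hp4.ne'
  rw [Finset.sum_congr rfl hterm, ← Finset.mul_sum]
  -- reindex the sum
  have hreflect := Finset.sum_range_reflect
    (fun k => (-1:ℝ)^k / (((n-k).factorial : ℝ) * (k.factorial : ℝ) * (β + ((n-k:ℕ):ℝ) + 1))) (n+1)
  have hS : ∑ k ∈ range (n+1),
        (-1:ℝ)^k / (((n-k).factorial : ℝ) * (k.factorial : ℝ) * (β + ((n-k:ℕ):ℝ) + 1))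
      = ((-1:ℝ)^n / (n.factorial : ℝ)) *
          ∑ j ∈ range (n+1), (-1:ℝ)^j * (n.choose j) / ((β+1) + j) := by
    rw [← hreflect, Finset.mul_sum]
    refine sum_congr rfl fun j hj => ?_
    have hjn : j ≤ n := Nat.lt_succ_iff.mp (mem_range.mp hj)
    have h1 : n+1-1-j = n-j := by omega
    have h2 : n-(n-j) = j := by omega
    simp only [h1, h2]
    have hc : ((n.choose j : ℕ) : ℝ) * (j.factorial : ℝ) * ((n-j).factorial : ℝ)
        = (n.factorial : ℝ) := by exact_mod_cast Nat.choose_mul_factorial_mul_factorial hjn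
    have hpow : (-1:ℝ)^(n-j) * (-1:ℝ)^j = (-1:ℝ)^n := by
      rw [← pow_add]; congr 1; omega
    have hpow2 : (-1:ℝ)^(n-j) = (-1:ℝ)^n * (-1:ℝ)^j := by
      have hsq : (-1:ℝ)^j * (-1:ℝ)^j = 1 := by
        rw [← pow_add]; exact Even.neg_one_pow ⟨j, rfl⟩
      calc (-1:ℝ)^(n-j) = (-1:ℝ)^(n-j) * ((-1:ℝ)^j * (-1:ℝ)^j) := by rw [hsq, mul_one]
        _ = (-1:ℝ)^n * (-1:ℝ)^j := by rw [← mul_assoc, hpow]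
    rw [hpow2, div_mul_div_comm, div_eq_div_iff (by positivity) (by positivity)]
    linear_combination (-((-1:ℝ)^n * (-1:ℝ)^j * (β+(j:ℝ)+1))) * hc
  rw [hS, sum_identity n (β+1) (by linarith)]
  have hprod : ∏ j ∈ range (n+1), ((β+1) + (j:ℝ))
      = Real.Gamma (β+n+2) / Real.Gamma (β+1) := by
    have h := gamma_prod (β+1) (by linarith) (n+1)
    rw [show β+1+((n+1:ℕ):ℝ) = β+(n:ℝ)+2 by push_cast; ring] at h
    rw [h, mul_div_cancel_left₀ _ (Real.Gamma_pos_of_pos (show (0:ℝ) < β+1 by linarith)).ne']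
  rw [hprod, realBeta, show (α+(n:ℝ)+1)+(β+1) = α+β+(n:ℝ)+2 by ring]
  have hg1 := (Real.Gamma_pos_of_pos (show (0:ℝ) < β+(n:ℝ)+2 by linarith)).ne'
  have hg2 := (Real.Gamma_pos_of_pos (show (0:ℝ) < β+1 by linarith)).ne'
  have hg3 := (Real.Gamma_pos_of_pos (show (0:ℝ) < α+β+(n:ℝ)+2 by linarith)).ne'
  have hg4 : (n.factorial : ℝ) ≠ 0 := Nat.cast_ne_zero.mpr n.factorial_ne_zero
  field_simp

/-- Integral of a Jacobi polynomial against an incomplete weight. -/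
theorem jacobiP_incomplete_weight (α β : ℝ) (hα : -1 < α) (hβ : 0 < β) (n : ℕ) :
    ∫ x in (-1 : ℝ)..1, jacobiP n α (β + 1) x * (1 - x) ^ α * (1 + x) ^ β
      = (2 : ℝ) ^ (α + β + 1) * (-1 : ℝ) ^ n * realBeta (α + n + 1) (β + 1) := by
  have hsub := intervalIntegral.integral_comp_mul_add
    (f := fun x => jacobiP n α (β+1) x * (1-x)^α * (1+x)^β) (a := (0:ℝ)) (b := 1)
    (two_ne_zero) (-1)
  norm_num at hsub
  have hptw : ∀ᵐ t : ℝ, t ∈ Set.uIoc (0:ℝ) 1 →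
      jacobiP n α (β+1) (2*t + -1) * (1-(2*t + -1))^α * (2*t)^β
        = ∑ k ∈ range (n+1),
            (gbinom (n+α) (n-k) * gbinom (n+(β+1)) k * ((-1:ℝ)^k * (2:ℝ)^(α+β))) *
              ((1-t)^(α+(k:ℝ)) * t^(β+((n-k:ℕ):ℝ))) := by
    have hne : ∀ᵐ t : ℝ, t ≠ 1 := by
      have hset : {a : ℝ | ¬ a ≠ 1} = {1} := by ext a; simp
      rw [ae_iff, hset]
      exact measure_singleton 1
    filter_upwards [hne] with t ht1 htm
    rw [Set.uIoc_of_le (by norm_num : (0:ℝ) ≤ 1)] at htm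
    have ht0 : 0 < t := htm.1
    have h1t : 0 < 1 - t := by
      have := lt_of_le_of_ne htm.2 ht1; linarith
    rw [jacobiP, Finset.sum_mul, Finset.sum_mul]
    refine sum_congr rfl fun k hk => ?_
    rw [show ((2*t + -1 - 1)/2 : ℝ) = -(1-t) by ring,
      show ((2*t + -1 + 1)/2 : ℝ) = t by ring,
      show (1 - (2*t + -1) : ℝ) = 2*(1-t) by ring,
      Real.mul_rpow (by norm_num : (0:ℝ) ≤ 2) h1t.le,
      Real.mul_rpow (by norm_num : (0:ℝ) ≤ 2) ht0.le,
      neg_pow, Real.rpow_add h1t, Real.rpow_add ht0, Real.rpow_add two_pos,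
      Real.rpow_natCast, Real.rpow_natCast]
    ring
  have hint : ∀ k ∈ range (n+1), IntervalIntegrable
      (fun t : ℝ => (gbinom (n+α) (n-k) * gbinom (n+(β+1)) k * ((-1:ℝ)^k * (2:ℝ)^(α+β))) *
        ((1-t)^(α+(k:ℝ)) * t^(β+((n-k:ℕ):ℝ)))) volume 0 1 := by
    intro k _
    have hk0 : (0:ℝ) ≤ k := Nat.cast_nonneg k
    have hnk0 : (0:ℝ) ≤ ((n-k:ℕ):ℝ) := Nat.cast_nonneg _
    exact (beta_integrable' (a := α+(k:ℝ)) (b := β+((n-k:ℕ):ℝ))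
      (by linarith) (by linarith)).const_mul _
  have hI : ∫ t in (0:ℝ)..1, jacobiP n α (β+1) (2*t + -1) * (1-(2*t + -1))^α * (2*t)^β
      = 2^(α+β) * ((-1:ℝ)^n * realBeta (α+n+1) (β+1)) := by
    rw [intervalIntegral.integral_congr_ae hptw, intervalIntegral.integral_finset_sum hint]
    have hval : ∀ k ∈ range (n+1),
        (∫ t in (0:ℝ)..1,
          (gbinom (n+α) (n-k) * gbinom (n+(β+1)) k * ((-1:ℝ)^k * (2:ℝ)^(α+β))) *
            ((1-t)^(α+(k:ℝ)) * t^(β+((n-k:ℕ):ℝ))))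
          = (2:ℝ)^(α+β) * (gbinom (n+α) (n-k) * gbinom (n+(β+1)) k * (-1:ℝ)^k *
              realBeta (β + ((n-k:ℕ):ℝ) + 1) (α+(k:ℝ)+1)) := by
      intro k _
      have hk0 : (0:ℝ) ≤ k := Nat.cast_nonneg k
      have hnk0 : (0:ℝ) ≤ ((n-k:ℕ):ℝ) := Nat.cast_nonneg _
      rw [intervalIntegral.integral_const_mul,
        beta_eval' (a := α+(k:ℝ)) (b := β+((n-k:ℕ):ℝ)) (by linarith) (by linarith)]
      ring
    rw [sum_congr rfl hval, ← Finset.mul_sum, key_sum α β hα hβ n]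
  rw [hI] at hsub
  rw [show α+β+1 = (α+β)+1 from rfl, Real.rpow_add_one (two_ne_zero)]
  linear_combination (-2 : ℝ) * hsub
end

section
/- Let α, β > -1, n ∈ ℕ, and define the shifted Jacobi polynomial Q_n^{(α,β)}(t) := P_n^{(α,β)}(2t-1) and R_n^{(α,β)}(t) := ((-1)^n B(α+1,β+1)/B(α+n+1,β+1)) Q_n^{(α,β+1)}(t). Then for every polynomial h with deg(h) ≤ n, (1/B(α+1,β+1)) ∫_0^1 h(t) R_n^{(α,β)}(t) (1-t)^α t^β dt = h(0). -/
set_option maxHeartbeats 1000000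

open MeasureTheory Finset

/-! ### Pochhammer-style products -/

noncomputable def pochR (x : ℝ) (j : ℕ) : ℝ := ∏ i ∈ Finset.range j, (x + i)

lemma pochR_pos {x : ℝ} (hx : 0 < x) (j : ℕ) : 0 < pochR x j :=
  Finset.prod_pos fun i _ => by positivity

lemma pochR_add (x : ℝ) (a b : ℕ) : pochR x (a + b) = pochR x a * pochR (x + a) b := by
  rw [pochR, Finset.prod_range_add]
  congr 1
  refine Finset.prod_congr rfl fun i _ => ?_
  push_cast; ring

lemma pochR_succ' (x : ℝ) (j : ℕ) : pochR x (j + 1) = x * pochR (x + 1) j := by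
  rw [pochR, Finset.prod_range_succ']
  simp only [Nat.cast_zero, add_zero, Nat.cast_add, Nat.cast_one]
  rw [mul_comm, pochR]
  congr 1
  exact Finset.prod_congr rfl fun i _ => by ring

lemma Gamma_add_nat {x : ℝ} (hx : 0 < x) (j : ℕ) :
    Real.Gamma (x + j) = pochR x j * Real.Gamma x := by
  induction j with
  | zero => simp [pochR]
  | succ j ih =>
    have h1 : x + (j + 1 : ℕ) = (x + j) + 1 := by push_cast; ring
    have h2 : pochR x (j + 1) = pochR x j * (x + j) := by
      rw [pochR, Finset.prod_range_succ, pochR]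
    rw [h1, Real.Gamma_add_one (by positivity), ih, h2]
    ring

lemma prod_lin_reflect (c : ℝ) (M : ℕ) :
    ∏ i ∈ Finset.range M, (c - i) = ∏ i ∈ Finset.range M, (c - M + 1 + i) := by
  induction M generalizing c with
  | zero => simp
  | succ M ih =>
    rw [Finset.prod_range_succ, ih]
    conv_rhs => rw [Finset.prod_range_succ']
    push_cast
    congr 1
    · exact Finset.prod_congr rfl fun i _ => by ring
    · ring

/-! ### Alternating sum identities via forward differences -/

lemma neg_one_pow_sub {n k : ℕ} (hk : k ≤ n) :
    ((-1 : ℝ)) ^ (n - k) = (-1) ^ n * (-1) ^ k := by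
  have h1 : ((-1 : ℝ)) ^ (n - k) * (-1) ^ k = (-1) ^ n := by
    rw [← pow_add, Nat.sub_add_cancel hk]
  have h2 : ((-1 : ℝ)) ^ k * (-1) ^ k = 1 := by
    rw [← pow_add, ← two_mul, pow_mul]; norm_num
  calc ((-1 : ℝ)) ^ (n - k) = (-1) ^ (n - k) * ((-1) ^ k * (-1) ^ k) := by rw [h2, mul_one]
    _ = (-1) ^ n * (-1) ^ k := by rw [← mul_assoc, h1]

lemma fwdDiff_inv_poch (x : ℝ) (hx : 0 < x) (p : ℕ) :
    fwdDiff (1 : ℕ) (fun j : ℕ => (pochR (x + j) (p + 1))⁻¹)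
      = (-(p + 1 : ℝ)) • fun j : ℕ => (pochR (x + j) (p + 2))⁻¹ := by
  funext j
  have h1 : pochR (x + j) (p + 2) = (x + j) * pochR (x + j + 1) (p + 1) := by
    rw [pochR_succ']
  have h2 : pochR (x + j) (p + 2) = pochR (x + j) (p + 1) * (x + j + (p + 1)) := by
    rw [show p + 2 = (p + 1) + 1 from rfl, pochR_add]
    congr 1
    simp only [pochR, Finset.prod_range_one]
    push_cast; ring
  have hprod : (x + j) * pochR (x + j + 1) (p + 1)
      = pochR (x + j) (p + 1) * (x + j + (p + 1)) := by rw [← h1, h2]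
  have hp1 : (0:ℝ) < pochR (x + j) (p + 1) := pochR_pos (by positivity) _
  have hp2 : (0:ℝ) < pochR (x + j + 1) (p + 1) := pochR_pos (by positivity) _
  have hxj : (0:ℝ) < x + j := by positivity
  have hcast : x + (↑(j + 1) : ℝ) = x + j + 1 := by push_cast; ring
  simp only [fwdDiff, Pi.smul_apply, smul_eq_mul, hcast]
  rw [h1, mul_inv]
  field_simp
  linear_combination (-1 : ℝ) * hprod

lemma fwdDiff_iter_inv (x : ℝ) (hx : 0 < x) (n : ℕ) :
    (fwdDiff (1 : ℕ))^[n] (fun j : ℕ => (pochR (x + j) 1)⁻¹)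
      = ((-1 : ℝ) ^ n * n.factorial) • fun j : ℕ => (pochR (x + j) (n + 1))⁻¹ := by
  induction n with
  | zero => simp
  | succ n ih =>
    rw [Function.iterate_succ_apply', ih, fwdDiff_const_smul, fwdDiff_inv_poch x hx n,
      smul_smul]
    congr 1
    simp [Nat.factorial_succ]
    push_cast
    ring

lemma alt_sum_inv {x : ℝ} (hx : 0 < x) (n : ℕ) :
    ∑ j ∈ Finset.range (n + 1), (-1 : ℝ) ^ j * (n.choose j) / (x + j)
      = n.factorial / pochR x (n + 1) := by
  have key := fwdDiff_iter_eq_sum_shift (M := ℕ) (G := ℝ) (h := 1)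
    (fun j : ℕ => (pochR (x + j) 1)⁻¹) n 0
  rw [fwdDiff_iter_inv x hx n] at key
  simp only [Pi.smul_apply, smul_eq_mul, zero_add, smul_eq_mul, mul_one, zsmul_eq_mul] at key
  have hsum : ∑ j ∈ Finset.range (n + 1), (-1 : ℝ) ^ j * (n.choose j) / (x + j)
      = (-1 : ℝ) ^ n * ((-1 : ℝ) ^ n * n.factorial * (pochR (x + (0:ℕ)) (n + 1))⁻¹) := by
    rw [key, Finset.mul_sum]
    refine Finset.sum_congr rfl fun k hk => ?_
    have hk' : k ≤ n := Nat.lt_succ_iff.mp (Finset.mem_range.mp hk)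
    simp only [pochR, Finset.prod_range_one, Nat.cast_zero, add_zero]
    push_cast
    rw [neg_one_pow_sub hk']
    have hsq : ((-1:ℝ))^(n*2) = 1 := by rw [mul_comm, pow_mul]; norm_num
    ring_nf
    rw [hsq, mul_one]
  rw [hsum, show x + ((0:ℕ):ℝ) = x by simp,
    show (-1 : ℝ) ^ n * ((-1 : ℝ) ^ n * n.factorial * (pochR x (n + 1))⁻¹)
      = ((-1 : ℝ) ^ n * (-1 : ℝ) ^ n) * (n.factorial * (pochR x (n + 1))⁻¹) from by ring,
    show ((-1 : ℝ) ^ n * (-1 : ℝ) ^ n) = 1 from by rw [← pow_add, ← two_mul, pow_mul]; norm_num,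
    one_mul, ← div_eq_mul_inv]

lemma fwdDiff_iter_zero (k : ℕ) : (fwdDiff (1 : ℕ))^[k] (0 : ℕ → ℝ) = 0 := by
  induction k with
  | zero => rfl
  | succ k ih =>
    rw [Function.iterate_succ_apply, show (fwdDiff (1:ℕ) (0 : ℕ → ℝ)) = 0 from by
      funext j; simp [fwdDiff], ih]

lemma fwdDiff_poch (c : ℝ) (m : ℕ) :
    fwdDiff (1 : ℕ) (fun j : ℕ => pochR (c + j) (m + 1))
      = ((m + 1 : ℝ)) • fun j : ℕ => pochR (c + 1 + j) m := by
  funext j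
  have hcast : c + (↑(j + 1) : ℝ) = c + j + 1 := by push_cast; ring
  have h1 : pochR (c + j + 1) (m + 1) = pochR (c + j + 1) m * (c + j + 1 + m) := by
    rw [pochR, Finset.prod_range_succ, pochR]
  have h2 : pochR (c + j) (m + 1) = (c + j) * pochR (c + j + 1) m := pochR_succ' _ _
  have h3 : pochR (c + 1 + j) m = pochR (c + j + 1) m := by
    rw [pochR, pochR]
    exact Finset.prod_congr rfl fun i _ => by ring
  simp only [fwdDiff, Pi.smul_apply, smul_eq_mul, hcast, h1, h2, h3]
  ring

lemma fwdDiff_iter_poch_eq_zero {m n : ℕ} (hmn : m < n) (c : ℝ) :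
    (fwdDiff (1 : ℕ))^[n] (fun j : ℕ => pochR (c + j) m) = 0 := by
  induction m generalizing n c with
  | zero =>
    obtain ⟨n', rfl⟩ : ∃ n', n = n' + 1 := ⟨n - 1, by omega⟩
    rw [Function.iterate_succ_apply,
      show fwdDiff (1:ℕ) (fun j : ℕ => pochR (c + j) 0) = 0 from by
        funext j; simp [fwdDiff, pochR], fwdDiff_iter_zero]
  | succ m ih =>
    obtain ⟨n', rfl⟩ : ∃ n', n = n' + 1 := ⟨n - 1, by omega⟩
    rw [Function.iterate_succ_apply, fwdDiff_poch, fwdDiff_iter_const_smul,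
      ih (by omega) (c + 1), smul_zero]

lemma alt_sum_poch_eq_zero {m n : ℕ} (hmn : m < n) (c : ℝ) :
    ∑ j ∈ Finset.range (n + 1), (-1 : ℝ) ^ j * (n.choose j) * pochR (c + j) m = 0 := by
  have key := fwdDiff_iter_eq_sum_shift (M := ℕ) (G := ℝ) (h := 1)
    (fun j : ℕ => pochR (c + j) m) n 0
  rw [fwdDiff_iter_poch_eq_zero hmn c] at key
  simp only [Pi.zero_apply, zero_add, smul_eq_mul, mul_one, zsmul_eq_mul] at key
  have : ∑ j ∈ Finset.range (n + 1), (-1 : ℝ) ^ j * (n.choose j) * pochR (c + j) m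
      = (-1 : ℝ) ^ n * ∑ k ∈ Finset.range (n + 1),
          (((-1 : ℤ) ^ (n - k) * n.choose k : ℤ) : ℝ) * pochR (c + k) m := by
    rw [Finset.mul_sum]
    refine Finset.sum_congr rfl fun k hk => ?_
    have hk' : k ≤ n := Nat.lt_succ_iff.mp (Finset.mem_range.mp hk)
    push_cast
    rw [neg_one_pow_sub hk']
    have hsq : ((-1:ℝ))^(n*2) = 1 := by rw [mul_comm, pow_mul]; norm_num
    ring_nf
    rw [hsq, mul_one]
  rw [this, ← key, mul_zero]

/-! ### The real Beta integral -/

lemma complex_integrand_eq (a b : ℝ) :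
    Set.EqOn (fun x : ℝ => ((x : ℂ) ^ ((a : ℂ) - 1) * (1 - (x : ℂ)) ^ ((b : ℂ) - 1)))
      (fun x : ℝ => ((x ^ (a - 1) * (1 - x) ^ (b - 1) : ℝ) : ℂ)) (Set.uIcc 0 1) := by
  intro x hx
  rw [Set.uIcc_of_le (by norm_num : (0:ℝ) ≤ 1)] at hx
  obtain ⟨h0, h1⟩ := hx
  have e1 : ((a : ℂ) - 1) = ((a - 1 : ℝ) : ℂ) := by push_cast; ring
  have e2 : ((b : ℂ) - 1) = ((b - 1 : ℝ) : ℂ) := by push_cast; ring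
  have e3 : (1 - (x:ℂ)) = (((1 - x : ℝ)) : ℂ) := by push_cast; ring
  simp only [e1, e2, e3, ← Complex.ofReal_cpow h0 (a-1),
    ← Complex.ofReal_cpow (by linarith : (0:ℝ) ≤ 1 - x) (b-1), ← Complex.ofReal_mul]

lemma betaIntegrable_real {a b : ℝ} (ha : 0 < a) (hb : 0 < b) :
    IntervalIntegrable (fun t : ℝ => t ^ (a - 1) * (1 - t) ^ (b - 1)) volume 0 1 := by
  have hc := Complex.betaIntegral_convergent (u := (a:ℂ)) (v := (b:ℂ)) (by simpa) (by simpa)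
  have hc2 : IntervalIntegrable
      (fun x : ℝ => ((x ^ (a - 1) * (1 - x) ^ (b - 1) : ℝ) : ℂ)) volume 0 1 := by
    rw [intervalIntegrable_iff] at hc ⊢
    exact hc.congr_fun (fun x hx => complex_integrand_eq a b
      (Set.uIoc_subset_uIcc hx)) measurableSet_uIoc
  have h3 : IntervalIntegrable
      (fun x : ℝ => Complex.re ((x ^ (a - 1) * (1 - x) ^ (b - 1) : ℝ) : ℂ)) volume 0 1 :=
    ⟨hc2.1.re, hc2.2.re⟩
  simpa using h3

lemma betaIntegral_real {a b : ℝ} (ha : 0 < a) (hb : 0 < b) :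
    ∫ t in (0:ℝ)..1, t ^ (a - 1) * (1 - t) ^ (b - 1) = realBeta a b := by
  have key := Complex.Gamma_mul_Gamma_eq_betaIntegral
    (s := (a:ℂ)) (t := (b:ℂ)) (by simpa) (by simpa)
  rw [Complex.betaIntegral] at key
  rw [intervalIntegral.integral_congr (complex_integrand_eq a b),
    show (∫ x in (0:ℝ)..1, ((x ^ (a-1) * (1-x) ^ (b-1) : ℝ) : ℂ))
      = ((∫ x in (0:ℝ)..1, x ^ (a-1) * (1-x) ^ (b-1) : ℝ) : ℂ)
      from RCLike.intervalIntegral_ofReal] at key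
  have hab : ((a:ℂ) + b) = ((a + b : ℝ) : ℂ) := by push_cast; ring
  rw [hab, Complex.Gamma_ofReal, Complex.Gamma_ofReal, Complex.Gamma_ofReal] at key
  have hG : Real.Gamma (a + b) ≠ 0 := (Real.Gamma_pos_of_pos (by linarith)).ne'
  have : ((Real.Gamma a * Real.Gamma b : ℝ) : ℂ)
      = ((Real.Gamma (a+b) * ∫ t in (0:ℝ)..1, t ^ (a - 1) * (1 - t) ^ (b - 1) : ℝ) : ℂ) := by
    push_cast
    rw [key]
  have hr := Complex.ofReal_inj.mp this
  rw [realBeta, eq_comm, div_eq_iff hG]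
  rw [hr]; ring

lemma betaIntegral_real' {p q : ℝ} (hp : -1 < p) (hq : -1 < q) :
    ∫ t in (0:ℝ)..1, t ^ p * (1-t) ^ q = realBeta (p+1) (q+1) := by
  have := betaIntegral_real (a := p+1) (b := q+1) (by linarith) (by linarith)
  simpa using this

lemma betaIntegrable_real' {p q : ℝ} (hp : -1 < p) (hq : -1 < q) :
    IntervalIntegrable (fun t : ℝ => t ^ p * (1-t) ^ q) volume 0 1 := by
  have := betaIntegrable_real (a := p+1) (b := q+1) (by linarith) (by linarith)
  simpa using this

lemma intervalIntegrable_of_eqOn {f g : ℝ → ℝ} (hg : IntervalIntegrable g volume 0 1)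
    (hfg : Set.EqOn g f (Set.uIcc 0 1)) : IntervalIntegrable f volume 0 1 := by
  rw [intervalIntegrable_iff] at hg ⊢
  exact hg.congr_fun (fun x hx => hfg (Set.uIoc_subset_uIcc hx)) measurableSet_uIoc

/-! ### Pointwise reduction of the moment integrand to a Beta integrand -/

lemma pow_mul_rpow {s : ℝ} (hs : 0 ≤ s) {c : ℝ} (hc : -1 < c) (j : ℕ) :
    s ^ j * s ^ c = s ^ (c + j) := by
  rcases eq_or_lt_of_le hs with rfl | h
  · rcases Nat.eq_zero_or_pos j with rfl | hj
    · simp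
    · have hcj : (0:ℝ) < c + j := by
        have : (1:ℝ) ≤ (j:ℝ) := by exact_mod_cast hj
        linarith
      rw [zero_pow (by omega), zero_mul, eq_comm, Real.zero_rpow hcj.ne']
  · rw [← Real.rpow_natCast s j, ← Real.rpow_add h, add_comm]

lemma term_eqOn (α β : ℝ) (hα : -1 < α) (hβ : -1 < β) (n m k : ℕ) :
    Set.EqOn (fun t : ℝ => t ^ m * ((t - 1) ^ k * t ^ (n - k)) * (1 - t) ^ α * t ^ β)
      (fun t : ℝ => (-1 : ℝ) ^ k * (t ^ (β + (m + (n - k) : ℕ)) * (1 - t) ^ (α + k)))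
      (Set.uIcc 0 1) := by
  intro t ht
  rw [Set.uIcc_of_le (by norm_num : (0:ℝ) ≤ 1)] at ht
  obtain ⟨h0, h1⟩ := ht
  have h1t : (0:ℝ) ≤ 1 - t := by linarith
  have A : t ^ (m + (n - k)) * t ^ β = t ^ (β + (m + (n - k) : ℕ)) := pow_mul_rpow h0 hβ _
  have B : (1 - t) ^ k * (1 - t) ^ α = (1 - t) ^ (α + k) := pow_mul_rpow h1t hα k
  calc t ^ m * ((t - 1) ^ k * t ^ (n - k)) * (1 - t) ^ α * t ^ β
      = (-1 : ℝ) ^ k * ((t ^ (m + (n - k)) * t ^ β) * ((1 - t) ^ k * (1 - t) ^ α)) := by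
        rw [show (t - 1 : ℝ) = -(1 - t) from by ring, neg_pow, pow_add]
        ring
    _ = (-1 : ℝ) ^ k * (t ^ (β + (m + (n - k) : ℕ)) * (1 - t) ^ (α + k)) := by rw [A, B]

lemma Q_expand (α β : ℝ) (n m : ℕ) (t : ℝ) :
    t ^ m * shiftedJacobiQ n α (β + 1) t * (1 - t) ^ α * t ^ β
      = ∑ k ∈ Finset.range (n + 1),
          (gbinom (n + α) (n - k) * gbinom (n + (β + 1)) k) *
            (t ^ m * ((t - 1) ^ k * t ^ (n - k)) * (1 - t) ^ α * t ^ β) := by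
  rw [shiftedJacobiQ, jacobiP]
  simp only [Finset.mul_sum, Finset.sum_mul]
  refine Finset.sum_congr rfl fun k _ => ?_
  have e1 : (2 * t - 1 - 1) / 2 = t - 1 := by ring
  have e2 : (2 * t - 1 + 1) / 2 = t := by ring
  rw [e1, e2]
  ring

lemma moment_integrable (α β : ℝ) (hα : -1 < α) (hβ : -1 < β) (n m : ℕ) :
    IntervalIntegrable
      (fun t : ℝ => t ^ m * shiftedJacobiQ n α (β + 1) t * (1 - t) ^ α * t ^ β)
      volume 0 1 := by
  refine intervalIntegrable_of_eqOn ?_ (fun t _ => (Q_expand α β n m t).symm)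
  rw [intervalIntegrable_iff]
  refine MeasureTheory.integrable_finset_sum _ fun k hk => ?_
  have : IntervalIntegrable (fun t : ℝ =>
      gbinom (n + α) (n - k) * gbinom (n + (β + 1)) k *
        (t ^ m * ((t - 1) ^ k * t ^ (n - k)) * (1 - t) ^ α * t ^ β)) volume 0 1 := by
    apply IntervalIntegrable.const_mul
    refine intervalIntegrable_of_eqOn ?_ (term_eqOn α β hα hβ n m k).symm
    exact ((betaIntegrable_real' (p := β + (m + (n - k) : ℕ)) (q := α + k)
      (by have : (0:ℝ) ≤ ((m + (n - k) : ℕ) : ℝ) := Nat.cast_nonneg _; linarith)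
      (by have : (0:ℝ) ≤ (k : ℝ) := Nat.cast_nonneg _; linarith)).const_mul _)
  exact intervalIntegrable_iff.mp this

lemma moment (α β : ℝ) (hα : -1 < α) (hβ : -1 < β) (n m : ℕ) :
    ∫ t in (0:ℝ)..1, t ^ m * shiftedJacobiQ n α (β + 1) t * (1 - t) ^ α * t ^ β
      = ∑ k ∈ Finset.range (n + 1),
          gbinom (n + α) (n - k) * gbinom (n + (β + 1)) k *
            ((-1 : ℝ) ^ k * realBeta (β + (m + (n - k) : ℕ) + 1) (α + k + 1)) := by
  have hm : (0:ℝ) ≤ 1 := by norm_num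
  rw [intervalIntegral.integral_congr (g := fun t => ∑ k ∈ Finset.range (n + 1),
          (gbinom (n + α) (n - k) * gbinom (n + (β + 1)) k) *
            (t ^ m * ((t - 1) ^ k * t ^ (n - k)) * (1 - t) ^ α * t ^ β))
      (fun t _ => Q_expand α β n m t)]
  have hInt : ∀ k ∈ Finset.range (n + 1), IntervalIntegrable (fun t : ℝ =>
      gbinom (n + α) (n - k) * gbinom (n + (β + 1)) k *
        (t ^ m * ((t - 1) ^ k * t ^ (n - k)) * (1 - t) ^ α * t ^ β)) volume 0 1 := by
    intro k hk
    apply IntervalIntegrable.const_mul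
    refine intervalIntegrable_of_eqOn ?_ (term_eqOn α β hα hβ n m k).symm
    exact ((betaIntegrable_real' (p := β + (m + (n - k) : ℕ)) (q := α + k)
      (by have : (0:ℝ) ≤ ((m + (n - k) : ℕ) : ℝ) := Nat.cast_nonneg _; linarith)
      (by have : (0:ℝ) ≤ (k : ℝ) := Nat.cast_nonneg _; linarith)).const_mul _)
  rw [intervalIntegral.integral_finset_sum hInt]
  refine Finset.sum_congr rfl fun k hk => ?_
  rw [intervalIntegral.integral_const_mul]
  congr 1
  have hq : -1 < α + (k:ℝ) := by have : (0:ℝ) ≤ (k : ℝ) := Nat.cast_nonneg _; linarith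
  have hp : -1 < β + ((m + (n - k) : ℕ) : ℝ) := by
    have : (0:ℝ) ≤ ((m + (n - k) : ℕ) : ℝ) := Nat.cast_nonneg _; linarith
  rw [intervalIntegral.integral_congr (term_eqOn α β hα hβ n m k),
    intervalIntegral.integral_const_mul, betaIntegral_real' hp hq]

/-! ### Evaluation of each Beta-moment term -/

lemma pochR_split (β : ℝ) {n k : ℕ} (hk : k ≤ n) :
    pochR (β + 1) (n + 1) = pochR (β + 1) (n - k) *
      ((β + 1 + ((n - k : ℕ) : ℝ)) * pochR (β + ((n - k : ℕ) : ℝ) + 2) k) := by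
  rw [show n + 1 = (n - k) + (k + 1) from by omega, pochR_add, pochR_succ',
    show β + 1 + ((n - k : ℕ) : ℝ) + 1 = β + ((n - k : ℕ) : ℝ) + 2 from by ring]

lemma term_value (α β : ℝ) (hα : -1 < α) (hβ : -1 < β) {n k : ℕ} (m : ℕ) (hk : k ≤ n) :
    gbinom (n + α) (n - k) * gbinom (n + (β + 1)) k *
        ((-1 : ℝ) ^ k * realBeta (β + (m + (n - k) : ℕ) + 1) (α + k + 1))
      = (Real.Gamma (α + 1) * Real.Gamma (β + 1) / Real.Gamma (α + β + (m + n : ℕ) + 2))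
          * pochR (α + 1) n * ((-1 : ℝ) ^ k / (k.factorial * (n - k).factorial))
          * (pochR (β + 1) (n - k) * pochR (β + ((n - k : ℕ) : ℝ) + 2) k)
          * pochR (β + 1 + ((n - k : ℕ) : ℝ)) m := by
  obtain ⟨j, rfl⟩ : ∃ j, n = k + j := ⟨n - k, by omega⟩
  simp only [show k + j - k = j from by omega]
  have hβ1 : (0:ℝ) < β + 1 := by linarith
  have hα1 : (0:ℝ) < α + 1 := by linarith
  have g1 : gbinom ((k + j : ℕ) + α) j = pochR (α + k + 1) j / j.factorial := by
    rw [gbinom, prod_lin_reflect]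
    congr 1
    rw [pochR]
    refine Finset.prod_congr rfl fun i _ => ?_
    push_cast; ring
  have g2 : gbinom ((k + j : ℕ) + (β + 1)) k = pochR (β + j + 2) k / k.factorial := by
    rw [gbinom, prod_lin_reflect]
    congr 1
    rw [pochR]
    refine Finset.prod_congr rfl fun i _ => ?_
    push_cast; ring
  have hGb : Real.Gamma (β + (m + j : ℕ) + 1) = pochR (β + 1) (m + j) * Real.Gamma (β + 1) := by
    rw [show β + ((m + j : ℕ) : ℝ) + 1 = (β + 1) + ((m + j : ℕ) : ℝ) from by ring]
    exact Gamma_add_nat hβ1 _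
  have hGa : Real.Gamma (α + k + 1) = pochR (α + 1) k * Real.Gamma (α + 1) := by
    rw [show α + (k : ℝ) + 1 = (α + 1) + (k : ℝ) from by ring]
    exact Gamma_add_nat hα1 _
  have hGd : (β + ((m + j : ℕ) : ℝ) + 1) + (α + (k:ℝ) + 1)
      = α + β + ((m + (k + j) : ℕ) : ℝ) + 2 := by push_cast; ring
  have pA : pochR (α + 1) (k + j) = pochR (α + 1) k * pochR (α + k + 1) j := by
    rw [pochR_add, show α + 1 + (k:ℝ) = α + (k:ℝ) + 1 from by ring]
  have pB : pochR (β + 1) (m + j) = pochR (β + 1) j * pochR (β + 1 + (j:ℝ)) m := by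
    rw [show m + j = j + m from by omega, pochR_add]
  rw [g1, g2, realBeta, hGb, hGa, hGd, pB, pA]
  ring

/-! ### The two moment sums -/

lemma sum_moment_pos (α β : ℝ) (hα : -1 < α) (hβ : -1 < β) {n m : ℕ}
    (hm1 : 1 ≤ m) (hmn : m ≤ n) :
    ∑ k ∈ Finset.range (n + 1), gbinom (n + α) (n - k) * gbinom (n + (β + 1)) k *
        ((-1 : ℝ) ^ k * realBeta (β + (m + (n - k) : ℕ) + 1) (α + k + 1)) = 0 := by
  obtain ⟨m', rfl⟩ : ∃ m', m = m' + 1 := ⟨m - 1, by omega⟩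
  set C0 : ℝ := (Real.Gamma (α + 1) * Real.Gamma (β + 1) /
      Real.Gamma (α + β + (m' + 1 + n : ℕ) + 2)) * pochR (α + 1) n * pochR (β + 1) (n + 1)
    with hC0
  set F : ℕ → ℝ := fun j => ((-1 : ℝ) ^ (n - j) / ((n - j).factorial * j.factorial)) *
      pochR (β + 2 + (j:ℝ)) m' with hF
  have hterm : ∀ k ∈ Finset.range (n + 1),
      gbinom (n + α) (n - k) * gbinom (n + (β + 1)) k *
        ((-1 : ℝ) ^ k * realBeta (β + ((m' + 1) + (n - k) : ℕ) + 1) (α + k + 1))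
      = C0 * F (n - k) := by
    intro k hk
    have hk' : k ≤ n := Nat.lt_succ_iff.mp (Finset.mem_range.mp hk)
    rw [term_value α β hα hβ (m' + 1) hk', hF, hC0, pochR_split β hk']
    simp only [show n - (n - k) = k from by omega]
    rw [show pochR (β + 1 + ((n - k : ℕ) : ℝ)) (m' + 1)
        = (β + 1 + ((n - k : ℕ) : ℝ)) * pochR (β + 1 + ((n - k : ℕ) : ℝ) + 1) m'
        from pochR_succ' _ _,
      show β + 1 + ((n - k : ℕ) : ℝ) + 1 = β + 2 + ((n - k : ℕ) : ℝ) from by ring]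
    ring
  rw [Finset.sum_congr rfl hterm, ← Finset.mul_sum]
  have hrefl : ∑ k ∈ Finset.range (n + 1), F (n - k) = ∑ j ∈ Finset.range (n + 1), F j := by
    have := Finset.sum_range_reflect F (n + 1)
    simpa using this
  rw [hrefl]
  have hFj : ∀ j ∈ Finset.range (n + 1), F j
      = ((-1 : ℝ) ^ n / n.factorial) *
          ((-1 : ℝ) ^ j * (n.choose j) * pochR ((β + 2) + (j:ℝ)) m') := by
    intro j hj
    have hj' : j ≤ n := Nat.lt_succ_iff.mp (Finset.mem_range.mp hj)
    have hchoose : ((n.choose j : ℕ) : ℝ) * j.factorial * (n - j).factorial = n.factorial := by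
      exact_mod_cast congrArg (Nat.cast : ℕ → ℝ) (Nat.choose_mul_factorial_mul_factorial hj')
    rw [hF]
    simp only []
    rw [neg_one_pow_sub hj']
    have hkf : ((j.factorial : ℕ) : ℝ) ≠ 0 := Nat.cast_ne_zero.mpr j.factorial_ne_zero
    have hjf : (((n - j).factorial : ℕ) : ℝ) ≠ 0 := Nat.cast_ne_zero.mpr (n - j).factorial_ne_zero
    have hcne : ((n.choose j : ℕ) : ℝ) ≠ 0 := Nat.cast_ne_zero.mpr (Nat.choose_pos hj').ne'
    rw [← hchoose]
    field_simp
  rw [Finset.sum_congr rfl hFj, ← Finset.mul_sum,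
    alt_sum_poch_eq_zero (show m' < n from by omega) (β + 2), mul_zero, mul_zero]

lemma sum_moment_zero (α β : ℝ) (hα : -1 < α) (hβ : -1 < β) (n : ℕ) :
    ∑ k ∈ Finset.range (n + 1), gbinom (n + α) (n - k) * gbinom (n + (β + 1)) k *
        ((-1 : ℝ) ^ k * realBeta (β + (0 + (n - k) : ℕ) + 1) (α + k + 1))
      = (-1 : ℝ) ^ n * realBeta (α + n + 1) (β + 1) := by
  have hβ1 : (0:ℝ) < β + 1 := by linarith
  set C0 : ℝ := (Real.Gamma (α + 1) * Real.Gamma (β + 1) /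
      Real.Gamma (α + β + (0 + n : ℕ) + 2)) * pochR (α + 1) n * pochR (β + 1) (n + 1)
    with hC0
  set F : ℕ → ℝ := fun j => ((-1 : ℝ) ^ (n - j) / ((n - j).factorial * j.factorial)) *
      (β + 1 + (j:ℝ))⁻¹ with hF
  have hterm : ∀ k ∈ Finset.range (n + 1),
      gbinom (n + α) (n - k) * gbinom (n + (β + 1)) k *
        ((-1 : ℝ) ^ k * realBeta (β + (0 + (n - k) : ℕ) + 1) (α + k + 1))
      = C0 * F (n - k) := by
    intro k hk
    have hk' : k ≤ n := Nat.lt_succ_iff.mp (Finset.mem_range.mp hk)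
    have hj1 : (0:ℝ) < β + 1 + ((n - k : ℕ) : ℝ) := by
      have : (0:ℝ) ≤ ((n - k : ℕ) : ℝ) := Nat.cast_nonneg _
      linarith
    rw [term_value α β hα hβ 0 hk', hF, hC0, pochR_split β hk']
    simp only [show n - (n - k) = k from by omega]
    rw [show pochR (β + 1 + ((n - k : ℕ) : ℝ)) 0 = 1 from by simp [pochR]]
    linear_combination (-(Real.Gamma (α + 1) * Real.Gamma (β + 1) /
        Real.Gamma (α + β + ((0 + n : ℕ) : ℝ) + 2) * pochR (α + 1) n *
        (pochR (β + 1) (n - k) * pochR (β + ((n - k : ℕ) : ℝ) + 2) k) *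
        ((-1 : ℝ) ^ k / (k.factorial * (n - k).factorial)))) *
      (mul_inv_cancel₀ hj1.ne')
  rw [Finset.sum_congr rfl hterm, ← Finset.mul_sum]
  have hrefl : ∑ k ∈ Finset.range (n + 1), F (n - k) = ∑ j ∈ Finset.range (n + 1), F j := by
    have := Finset.sum_range_reflect F (n + 1)
    simpa using this
  rw [hrefl]
  have hFj : ∀ j ∈ Finset.range (n + 1), F j
      = ((-1 : ℝ) ^ n / n.factorial) *
          ((-1 : ℝ) ^ j * (n.choose j) / ((β + 1) + (j:ℝ))) := by
    intro j hj
    have hj' : j ≤ n := Nat.lt_succ_iff.mp (Finset.mem_range.mp hj)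
    have hchoose : ((n.choose j : ℕ) : ℝ) * j.factorial * (n - j).factorial = n.factorial := by
      exact_mod_cast congrArg (Nat.cast : ℕ → ℝ) (Nat.choose_mul_factorial_mul_factorial hj')
    rw [hF]
    simp only []
    rw [neg_one_pow_sub hj']
    have hkf : ((j.factorial : ℕ) : ℝ) ≠ 0 := Nat.cast_ne_zero.mpr j.factorial_ne_zero
    have hjf : (((n - j).factorial : ℕ) : ℝ) ≠ 0 := Nat.cast_ne_zero.mpr (n - j).factorial_ne_zero
    have hcne : ((n.choose j : ℕ) : ℝ) ≠ 0 := Nat.cast_ne_zero.mpr (Nat.choose_pos hj').ne'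
    have hj1 : (0:ℝ) < β + 1 + (j:ℝ) := by
      have : (0:ℝ) ≤ (j : ℝ) := Nat.cast_nonneg _
      linarith
    rw [← hchoose]
    field_simp
  rw [Finset.sum_congr rfl hFj, ← Finset.mul_sum, alt_sum_inv hβ1 n]
  have hpoch : (0:ℝ) < pochR (β + 1) (n + 1) := pochR_pos hβ1 _
  have hnf : ((n.factorial : ℕ) : ℝ) ≠ 0 := Nat.cast_ne_zero.mpr n.factorial_ne_zero
  rw [hC0, realBeta,
    show α + (n:ℝ) + 1 = (α + 1) + (n:ℝ) from by ring, Gamma_add_nat (by linarith) n,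
    show (α + 1) + (n:ℝ) + (β + 1) = α + β + ((0 + n : ℕ) : ℝ) + 2 from by push_cast; ring]
  have h1 : (-1 : ℝ) ^ n / n.factorial * ((n.factorial : ℝ) / pochR (β + 1) (n + 1))
      = (-1 : ℝ) ^ n * (pochR (β + 1) (n + 1))⁻¹ := by
    field_simp
  rw [h1]
  linear_combination (Real.Gamma (α + 1) * Real.Gamma (β + 1) /
      Real.Gamma (α + β + ((0 + n : ℕ) : ℝ) + 2) * pochR (α + 1) n * (-1 : ℝ) ^ n) *
    (mul_inv_cancel₀ hpoch.ne')

/-- Reproducing property of  on the unit interval. -/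
theorem reprodR_reproduces (α β : ℝ) (hα : -1 < α) (hβ : -1 < β) (n : ℕ)
    (h : Polynomial ℝ) (hdeg : h.degree ≤ n) :
    (1 / realBeta (α + 1) (β + 1)) *
      ∫ t in (0 : ℝ)..1, h.eval t * reprodR n α β t * (1 - t) ^ α * t ^ β
      = h.eval 0 := by
  have hB1 : 0 < realBeta (α + 1) (β + 1) := by
    have h1 := Real.Gamma_pos_of_pos (show (0:ℝ) < α + 1 by linarith)
    have h2 := Real.Gamma_pos_of_pos (show (0:ℝ) < β + 1 by linarith)
    have h3 := Real.Gamma_pos_of_pos (show (0:ℝ) < (α + 1) + (β + 1) by linarith)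
    exact div_pos (mul_pos h1 h2) h3
  have hB2 : 0 < realBeta (α + (n:ℝ) + 1) (β + 1) := by
    have hn : (0:ℝ) ≤ (n:ℝ) := Nat.cast_nonneg _
    have h1 := Real.Gamma_pos_of_pos (show (0:ℝ) < α + (n:ℝ) + 1 by linarith)
    have h2 := Real.Gamma_pos_of_pos (show (0:ℝ) < β + 1 by linarith)
    have h3 := Real.Gamma_pos_of_pos (show (0:ℝ) < (α + (n:ℝ) + 1) + (β + 1) by linarith)
    exact div_pos (mul_pos h1 h2) h3
  have hdeg' : h.natDegree < n + 1 :=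
    Nat.lt_succ_of_le (Polynomial.natDegree_le_iff_degree_le.mpr hdeg)
  have heval : ∀ t : ℝ, h.eval t = ∑ m ∈ Finset.range (n + 1), h.coeff m * t ^ m :=
    fun t => Polynomial.eval_eq_sum_range' hdeg' t
  have hexpand : ∀ t : ℝ, h.eval t * reprodR n α β t * (1 - t) ^ α * t ^ β
      = ((-1 : ℝ) ^ n * realBeta (α + 1) (β + 1) / realBeta (α + n + 1) (β + 1)) *
          ∑ m ∈ Finset.range (n + 1), h.coeff m *
            (t ^ m * shiftedJacobiQ n α (β + 1) t * (1 - t) ^ α * t ^ β) := by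
    intro t
    rw [heval t, reprodR]
    rw [Finset.mul_sum, Finset.sum_mul, Finset.sum_mul, Finset.sum_mul]
    refine Finset.sum_congr rfl fun m _ => ?_
    ring
  rw [intervalIntegral.integral_congr (g := fun t =>
      ((-1 : ℝ) ^ n * realBeta (α + 1) (β + 1) / realBeta (α + n + 1) (β + 1)) *
        ∑ m ∈ Finset.range (n + 1), h.coeff m *
          (t ^ m * shiftedJacobiQ n α (β + 1) t * (1 - t) ^ α * t ^ β))
      (fun t _ => hexpand t),
    intervalIntegral.integral_const_mul]
  have hInt : ∀ m ∈ Finset.range (n + 1), IntervalIntegrable (fun t : ℝ =>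
      h.coeff m * (t ^ m * shiftedJacobiQ n α (β + 1) t * (1 - t) ^ α * t ^ β)) volume 0 1 :=
    fun m _ => (moment_integrable α β hα hβ n m).const_mul _
  rw [intervalIntegral.integral_finset_sum hInt]
  have hval : ∀ m ∈ Finset.range (n + 1),
      (∫ t in (0:ℝ)..1, h.coeff m *
        (t ^ m * shiftedJacobiQ n α (β + 1) t * (1 - t) ^ α * t ^ β))
      = h.coeff m * ∑ k ∈ Finset.range (n + 1),
          gbinom (n + α) (n - k) * gbinom (n + (β + 1)) k *
            ((-1 : ℝ) ^ k * realBeta (β + (m + (n - k) : ℕ) + 1) (α + k + 1)) := by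
    intro m _
    rw [intervalIntegral.integral_const_mul, moment α β hα hβ n m]
  rw [Finset.sum_congr rfl hval]
  have hsplit : ∑ m ∈ Finset.range (n + 1), (h.coeff m * ∑ k ∈ Finset.range (n + 1),
      gbinom (n + α) (n - k) * gbinom (n + (β + 1)) k *
        ((-1 : ℝ) ^ k * realBeta (β + (m + (n - k) : ℕ) + 1) (α + k + 1)))
      = h.coeff 0 * ((-1 : ℝ) ^ n * realBeta (α + n + 1) (β + 1)) := by
    rw [Finset.sum_eq_single 0]
    · rw [sum_moment_zero α β hα hβ n]
    · intro m hm hm0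
      rw [sum_moment_pos α β hα hβ (show 1 ≤ m from by omega)
        (Nat.lt_succ_iff.mp (Finset.mem_range.mp hm)), mul_zero]
    · intro habs
      exact absurd (Finset.mem_range.mpr (Nat.succ_pos n)) habs
  rw [hsplit, ← Polynomial.coeff_zero_eq_eval_zero]
  have hsq : ((-1 : ℝ) ^ n) * ((-1 : ℝ) ^ n) = 1 := by
    rw [← pow_add, ← two_mul, pow_mul]; norm_num
  field_simp
  linear_combination h.coeff 0 * hsq
end

section
/- Let Ω ⊆ ℂ be open, W : Ω → (0,∞) continuous, n ≥ 1, and K ⊆ Ω compact. Then there exists a constant C > 0 such that for every n-analytic function f on Ω with ∫_Ω |f|² W dμ < ∞ and every z ∈ K, |f(z)| ≤ C (∫_Ω |f|² W dμ)^{1/2}. -/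
open MeasureTheory Finset

/-- The open unit disk in the complex plane. -/
def unitDisk : Set ℂ := {z : ℂ | ‖z‖ < 1}

/-- f is n-analytic on U: it is a polynomial of degree < n in conj z
with holomorphic coefficients. -/
def PolyAnalyticOn (n : ℕ) (f : ℂ → ℂ) (U : Set ℂ) : Prop :=
  ∃ g : ℕ → ℂ → ℂ, (∀ k < n, DifferentiableOn ℂ (g k) U) ∧
    ∀ z ∈ U, f z = ∑ k ∈ Finset.range n, g k z * (starRingEnd ℂ z) ^ k

section PolyAnalyticProof

open MeasureTheory Finset Metric Complex Real Set Matrix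

private lemma theta_int (k : ℤ) (hk : k ≠ 0) :
    ∫ θ in Ioo (-π) π, Complex.exp ((k : ℂ) * θ * Complex.I) = 0 := by
  have h1 : ∫ θ in Ioo (-π) π, Complex.exp ((k : ℂ) * θ * Complex.I)
      = ∫ θ in (-π)..π, Complex.exp (((k : ℂ) * Complex.I) * θ) := by
    rw [intervalIntegral.integral_of_le (by linarith [Real.pi_pos] : -π ≤ π),
      MeasureTheory.integral_Ioc_eq_integral_Ioo]
    congr 1; ext θ; ring_nf
  rw [h1, integral_exp_mul_complex (by simp [hk, Complex.ext_iff] : ((k : ℂ) * Complex.I) ≠ 0)]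
  have : Complex.exp ((k:ℂ) * Complex.I * π) = Complex.exp ((k:ℂ) * Complex.I * (-π)) := by
    rw [Complex.exp_eq_exp_iff_exists_int]
    exact ⟨k, by ring⟩
  rw [this]; simp

private lemma monomial_int (m j : ℕ) (ρ : ℝ) (hρ : 0 < ρ) :
    ∫ w in closedBall (0:ℂ) ρ, w ^ m * (starRingEnd ℂ w) ^ j =
      if m = j then (((π * ρ ^ (2*j+2) / (j+1) : ℝ)) : ℂ) else 0 := by
  have key : ∫ w in closedBall (0:ℂ) ρ, w ^ m * (starRingEnd ℂ w) ^ j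
      = ∫ p in Ioc (0:ℝ) ρ ×ˢ Ioo (-π) π,
          ((p.1 ^ (m+j+1) : ℝ) : ℂ) * Complex.exp (((m:ℂ) - j) * p.2 * Complex.I) := by
    rw [← MeasureTheory.integral_indicator measurableSet_closedBall,
      ← Complex.integral_comp_polarCoord_symm]
    rw [polarCoord_target]
    rw [← MeasureTheory.integral_indicator (by
      exact (measurableSet_Ioi.prod measurableSet_Ioo) : MeasurableSet (Ioi (0:ℝ) ×ˢ Ioo (-π) π)),
      ← MeasureTheory.integral_indicator (by
      exact (measurableSet_Ioc.prod measurableSet_Ioo) : MeasurableSet (Ioc (0:ℝ) ρ ×ˢ Ioo (-π) π))]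
    congr 1
    ext p
    rcases p with ⟨r, θ⟩
    by_cases hT : (r, θ) ∈ Ioi (0:ℝ) ×ˢ Ioo (-π) π
    · rw [Set.indicator_of_mem hT]
      have hr : 0 < r := hT.1
      have hsymm : Complex.polarCoord.symm (r, θ) = (r : ℂ) * Complex.exp (θ * Complex.I) := by
        rw [Complex.polarCoord_symm_apply, Complex.exp_mul_I]
        push_cast; ring
      by_cases hle : r ≤ ρ
      · have hmem : Complex.polarCoord.symm (r, θ) ∈ closedBall (0:ℂ) ρ := by
          simp only [mem_closedBall, Complex.dist_eq, sub_zero]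
          rw [Complex.norm_polarCoord_symm]
          simpa [abs_of_pos hr] using hle
        rw [Set.indicator_of_mem hmem, Set.indicator_of_mem (show (r,θ) ∈ Ioc (0:ℝ) ρ ×ˢ Ioo (-π) π from ⟨⟨hr, hle⟩, hT.2⟩)]
        rw [hsymm]
        have hconj : (starRingEnd ℂ) ((r : ℂ) * Complex.exp (θ * Complex.I))
            = (r : ℂ) * Complex.exp (-(θ * Complex.I)) := by
          rw [_root_.map_mul, Complex.conj_ofReal, ← Complex.exp_conj]
          congr 2
          simp [Complex.ext_iff]
        rw [hconj]
        rw [Complex.real_smul]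
        rw [mul_pow, mul_pow, ← Complex.exp_nat_mul, ← Complex.exp_nat_mul]
        rw [show ((r:ℂ) ^ m * Complex.exp (↑m * (↑θ * Complex.I)) *
            ((r:ℂ) ^ j * Complex.exp (↑j * -(↑θ * Complex.I)))) =
            (r:ℂ)^m * (r:ℂ)^j * (Complex.exp (↑m * (↑θ * Complex.I)) *
              Complex.exp (↑j * -(↑θ * Complex.I))) from by ring, ← Complex.exp_add]
        push_cast
        ring_nf
      · have hnmem : Complex.polarCoord.symm (r, θ) ∉ closedBall (0:ℂ) ρ := by
          simp only [mem_closedBall, Complex.dist_eq, sub_zero]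
          rw [Complex.norm_polarCoord_symm, abs_of_pos hr]; exact fun h => hle h
        rw [Set.indicator_of_notMem hnmem, Set.indicator_of_notMem (by
          simp only [Set.mem_prod, Set.mem_Ioc, not_and]; intro h; exact absurd h.2 hle)]
        simp
    · rw [Set.indicator_of_notMem hT, Set.indicator_of_notMem (by
        intro h; exact hT ⟨Ioc_subset_Ioi_self h.1, h.2⟩)]
  rw [key, MeasureTheory.Measure.volume_eq_prod,
    MeasureTheory.setIntegral_prod_mul (fun r : ℝ => ((r ^ (m+j+1) : ℝ) : ℂ))
      (fun θ : ℝ => Complex.exp (((m:ℂ) - j) * θ * Complex.I))]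
  have hrad : ∫ r in Ioc (0:ℝ) ρ, ((r ^ (m+j+1) : ℝ) : ℂ) = ((ρ^(m+j+2)/(m+j+2) : ℝ) : ℂ) := by
    rw [← intervalIntegral.integral_of_le hρ.le, intervalIntegral.integral_ofReal,
      integral_pow]
    norm_num
    ring_nf
  rw [hrad]
  by_cases h : m = j
  · subst h
    have hang : ∫ θ in Ioo (-π) π, Complex.exp (((m:ℂ) - m) * θ * Complex.I)
        = ((2 * π : ℝ) : ℂ) := by
      simp only [sub_self, zero_mul, Complex.exp_zero]
      rw [MeasureTheory.setIntegral_const, Real.volume_real_Ioo_of_le (by linarith [Real.pi_pos])]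
      rw [Complex.real_smul]; push_cast; ring
    rw [hang, if_pos rfl]
    push_cast
    have h1 : (m:ℂ) + (m:ℂ) + 2 ≠ 0 := by
      intro hc
      have := congrArg Complex.re hc
      simp at this
      linarith [this, Nat.cast_nonneg (α := ℝ) m]
    have h2 : (m:ℂ) + 1 ≠ 0 := by
      intro hc
      have := congrArg Complex.re hc
      simp at this
      linarith [this, Nat.cast_nonneg (α := ℝ) m]
    field_simp
    have h3 : (2:ℂ) + (m:ℂ)*2 ≠ 0 := by
      rw [show (2:ℂ) + (m:ℂ)*2 = 2*((m:ℂ)+1) by ring]; exact mul_ne_zero two_ne_zero h2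
    linear_combination ((ρ:ℂ)^2*(ρ:ℂ)^(m*2)) * mul_inv_cancel₀ h3
  · have hk : ((m:ℤ) - j) ≠ 0 := by
      simpa [sub_eq_zero] using fun hc => h (by exact_mod_cast hc)
    have hang : ∫ θ in Ioo (-π) π, Complex.exp (((m:ℂ) - j) * θ * Complex.I) = 0 := by
      have := theta_int ((m:ℤ) - j) hk
      convert this using 3
      push_cast; ring
    rw [hang, if_neg h, mul_zero]

private lemma integral_series (h : ℂ → ℂ) (z₀ : ℂ) (r : NNReal) (hr : 0 < r)
    (hd : DifferentiableOn ℂ h (closedBall z₀ r)) :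
    ∃ a : ℕ → ℂ, a 0 = h z₀ ∧ ∀ ρ : ℝ, 0 < ρ → ρ < r → ∀ j : ℕ,
      ∫ w in closedBall z₀ ρ, h w * (starRingEnd ℂ) (w - z₀) ^ j =
        ((π * ρ^(2*j+2)/(j+1) : ℝ) : ℂ) * a j := by
  have hps := hd.hasFPowerSeriesOnBall hr
  set p := cauchyPowerSeries h z₀ r with hp
  refine ⟨p.coeff, hps.coeff_zero (fun _ => 1), ?_⟩
  intro ρ hρ hρr j
  -- translation
  have htrans : ∫ w in closedBall z₀ ρ, h w * (starRingEnd ℂ) (w - z₀) ^ j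
      = ∫ u in closedBall (0:ℂ) ρ, h (z₀ + u) * (starRingEnd ℂ) u ^ j := by
    have hemb : MeasurableEmbedding (fun u : ℂ => z₀ + u) :=
      (Homeomorph.addLeft z₀).measurableEmbedding
    have hmp : MeasurePreserving (fun u : ℂ => z₀ + u) volume volume :=
      measurePreserving_add_left volume z₀
    have hpre : (fun u : ℂ => z₀ + u) ⁻¹' closedBall z₀ ρ = closedBall (0:ℂ) ρ := by
      ext u
      simp [Complex.dist_eq, add_sub_cancel_left]
    rw [← hmp.setIntegral_preimage_emb hemb
      (fun w => h w * (starRingEnd ℂ) (w - z₀) ^ j) (closedBall z₀ ρ), hpre]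
    simp
  rw [htrans]
  -- power series hasSum on the ball
  have hcont : ContinuousOn h (closedBall z₀ (r:ℝ)) := hd.continuousOn
  have hsum_pt : ∀ u ∈ closedBall (0:ℂ) ρ,
      HasSum (fun m => p.coeff m * u ^ m * (starRingEnd ℂ) u ^ j)
        (h (z₀ + u) * (starRingEnd ℂ) u ^ j) := by
    intro u hu
    have hu' : u ∈ Metric.eball (0:ℂ) r := by
      have h1 : ‖u‖ < (r:ℝ) := by
        calc ‖u‖ ≤ ρ := by simpa [Complex.dist_eq] using hu
          _ < r := hρr
      rw [Metric.mem_eball, edist_zero_right, ← ENNReal.coe_lt_coe] at *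
      exact_mod_cast (by rwa [← coe_nnnorm, NNReal.coe_lt_coe] at h1 : ‖u‖₊ < r)
    have := hps.hasSum hu'
    simp_rw [FormalMultilinearSeries.apply_eq_pow_smul_coeff, smul_eq_mul] at this
    have := this.mul_right ((starRingEnd ℂ) u ^ j)
    have e : (fun m => p.coeff m * u ^ m * (starRingEnd ℂ) u ^ j)
        = (fun i => u ^ i * p.coeff i * (starRingEnd ℂ) u ^ j) := funext fun m => by ring
    rw [e]; exact this
  set F : ℕ → ℂ → ℂ := fun m u => p.coeff m * u ^ m * (starRingEnd ℂ) u ^ j with hF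
  have hmeas : ∀ m : ℕ, AEStronglyMeasurable (F m) (volume.restrict (closedBall (0:ℂ) ρ)) := by
    intro m
    exact ((continuous_const.mul (continuous_pow m)).mul
      (Complex.continuous_conj.pow j)).aestronglyMeasurable
  have hbound : ∀ m : ℕ, ∀ᵐ u ∂(volume.restrict (closedBall (0:ℂ) ρ)),
      ‖F m u‖ ≤ ‖p m‖ * ρ ^ m * ρ ^ j := by
    intro m
    filter_upwards [ae_restrict_mem measurableSet_closedBall] with u hu
    have hun : ‖u‖ ≤ ρ := by simpa [Complex.dist_eq] using hu
    have hc : ‖p.coeff m‖ ≤ ‖p m‖ := by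
      calc ‖p.coeff m‖ = ‖p m (fun _ => 1)‖ := rfl
        _ ≤ ‖p m‖ * ∏ _i : Fin m, ‖(1:ℂ)‖ := (p m).le_opNorm _
        _ = ‖p m‖ := by simp
    have : ‖F m u‖ = ‖p.coeff m‖ * ‖u‖ ^ m * ‖u‖ ^ j := by
      simp [hF, norm_mul, norm_pow, RCLike.norm_conj]
    rw [this]
    gcongr <;> simp [norm_nonneg, hun]
  have hsummable : Summable (fun m => ‖p m‖ * ρ ^ m * ρ ^ j) := by
    apply Summable.mul_right
    have hrad : (ρ.toNNReal : ENNReal) < p.radius := by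
      refine lt_of_lt_of_le ?_ hps.r_le
      rw [ENNReal.coe_lt_coe]
      rw [show r = ((r:ℝ)).toNNReal from (Real.toNNReal_coe).symm]
      exact (Real.toNNReal_lt_toNNReal_iff (by positivity)).mpr hρr
    have := p.summable_norm_mul_pow hrad
    simpa [Real.coe_toNNReal _ hρ.le] using this
  have hbint : Integrable (fun _ : ℂ => ∑' m : ℕ, ‖p m‖ * ρ^m * ρ^j)
      (volume.restrict (closedBall (0:ℂ) ρ)) :=
    integrableOn_const (measure_closedBall_lt_top).ne
  have hlim : ∀ᵐ u ∂(volume.restrict (closedBall (0:ℂ) ρ)),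
      HasSum (fun m => F m u) (h (z₀ + u) * (starRingEnd ℂ) u ^ j) := by
    filter_upwards [ae_restrict_mem measurableSet_closedBall] with u hu using hsum_pt u hu
  have hhs := MeasureTheory.hasSum_integral_of_dominated_convergence
      (μ := volume.restrict (closedBall (0:ℂ) ρ)) (F := F)
      (f := fun u => h (z₀ + u) * (starRingEnd ℂ) u ^ j)
      (fun m _ => ‖p m‖ * ρ^m * ρ^j) hmeas hbound
      (Filter.Eventually.of_forall fun _ => hsummable) hbint hlim
  have hFint : ∀ m : ℕ, ∫ u in closedBall (0:ℂ) ρ, F m u =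
      (if m = j then ((π * ρ^(2*j+2)/(j+1) : ℝ) : ℂ) * p.coeff j else 0) := by
    intro m
    have h1 : ∫ u in closedBall (0:ℂ) ρ, F m u
        = p.coeff m * ∫ u in closedBall (0:ℂ) ρ, u ^ m * (starRingEnd ℂ) u ^ j := by
      rw [← MeasureTheory.integral_const_mul]
      apply MeasureTheory.integral_congr_ae
      filter_upwards with u
      simp only [hF]; ring
    rw [h1, monomial_int m j ρ hρ]
    split_ifs with hmj
    · subst hmj; ring
    · ring
  simp_rw [hFint] at hhs
  exact hhs.unique (hasSum_ite_eq j _)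

private lemma lagrange_extract (n : ℕ) (hn : 0 < n) (t : Fin n → ℝ)
    (ht0 : ∀ i, 0 < t i) (htinj : Function.Injective t) :
    ∃ lam : Fin n → ℂ, ∀ c : Fin n → ℂ,
      c ⟨0, hn⟩ = ∑ i, lam i * (∑ k, c k * (t i : ℂ) ^ ((k : ℕ) + 1)) := by
  classical
  set v : Fin n → ℂ := fun i => (t i : ℂ) with hv
  have hvinj : Function.Injective v := fun i j hij => htinj (Complex.ofReal_injective (by simpa [hv] using hij))
  set M : Matrix (Fin n) (Fin n) ℂ := Matrix.of (fun i k : Fin n => v i ^ ((k:ℕ) + 1)) with hM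
  have hdet : M.det ≠ 0 := by
    have hMeq : M = Matrix.of (fun i k : Fin n => v i * Matrix.vandermonde v i k) := by
      ext i k
      simp [hM, Matrix.vandermonde, pow_succ']
    rw [hMeq, Matrix.det_mul_column]
    apply mul_ne_zero
    · exact Finset.prod_ne_zero_iff.mpr fun i _ => by
        simpa [hv] using (ht0 i).ne'
    · exact Matrix.det_vandermonde_ne_zero_iff.mpr hvinj
  refine ⟨fun i => M⁻¹ ⟨0, hn⟩ i, fun c => ?_⟩
  have hid : M⁻¹ *ᵥ (M *ᵥ c) = c := by
    rw [Matrix.mulVec_mulVec, Matrix.nonsing_inv_mul M (isUnit_iff_ne_zero.mpr hdet),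
      Matrix.one_mulVec]
  calc c ⟨0, hn⟩ = (M⁻¹ *ᵥ (M *ᵥ c)) ⟨0, hn⟩ := by rw [hid]
    _ = ∑ i, M⁻¹ ⟨0, hn⟩ i * (∑ k, c k * v i ^ ((k:ℕ) + 1)) := by
        rw [Matrix.mulVec]
        simp only [dotProduct, Matrix.mulVec, hM, Matrix.of_apply]
        congr 1
        ext i
        congr 1
        exact Finset.sum_congr rfl fun k _ => by ring

/-- Uniform boundedness of evaluation functionals on compact sets for weighted
Bergman spaces of polyanalytic functions. -/
theorem polyanalytic_evaluation_bounded (Ω : Set ℂ) (hΩ : IsOpen Ω)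
    (W : ℂ → ℝ) (hWc : ContinuousOn W Ω) (hWpos : ∀ z ∈ Ω, 0 < W z)
    (n : ℕ) (hn : 1 ≤ n) (K : Set ℂ) (hK : IsCompact K) (hKΩ : K ⊆ Ω) :
    ∃ C > 0, ∀ f : ℂ → ℂ, PolyAnalyticOn n f Ω →
      IntegrableOn (fun z => ‖f z‖ ^ 2 * W z) Ω volume →
      ∀ z ∈ K, ‖f z‖ ≤
        C * Real.sqrt (∫ z in Ω, ‖f z‖ ^ 2 * W z ∂volume) := by
  classical
  rcases K.eq_empty_or_nonempty with hKe | hKne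
  · exact ⟨1, one_pos, by simp [hKe]⟩
  obtain ⟨r, hr0, hrΩ⟩ := hK.exists_cthickening_subset_open hΩ hKΩ
  set K' := Metric.cthickening r K with hK'def
  have hK'cpt : IsCompact K' := hK.cthickening
  have hK'ne : K'.Nonempty := hKne.mono (Metric.self_subset_cthickening K)
  obtain ⟨zmin, hzminK', hzmin⟩ := hK'cpt.exists_isMinOn hK'ne (hWc.mono hrΩ)
  set w₀ := W zmin with hw₀def
  have hw₀pos : 0 < w₀ := hWpos _ (hrΩ hzminK')
  -- radii
  set t : Fin n → ℝ := fun i => r^2 * (((i:ℕ):ℝ)+1) / (n+1) with htdef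
  have ht0 : ∀ i, 0 < t i := fun i => by positivity
  have htlt : ∀ i, t i < r^2 := by
    intro i
    have h1 : (((i:ℕ):ℝ)+1) < (n:ℝ)+1 := by exact_mod_cast Nat.succ_lt_succ i.isLt
    rw [htdef, div_lt_iff₀ (by positivity)]
    have := mul_lt_mul_of_pos_left h1 (show (0:ℝ) < r^2 by positivity)
    linarith
  have htinj : Function.Injective t := by
    intro i j hij
    simp only [htdef] at hij
    have hne : ((n:ℝ)+1) ≠ 0 := by positivity
    have h2 : r^2 * (((i:ℕ):ℝ)+1) = r^2 * (((j:ℕ):ℝ)+1) :=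
      (div_left_inj' hne).mp hij
    have h3 : (((i:ℕ):ℝ)+1) = (((j:ℕ):ℝ)+1) :=
      mul_left_cancel₀ (pow_ne_zero 2 hr0.ne') h2
    have : ((i:ℕ):ℝ) = ((j:ℕ):ℝ) := by linarith
    exact Fin.ext (by exact_mod_cast this)
  set ρ : Fin n → ℝ := fun i => Real.sqrt (t i) with hρdef
  have hρ0 : ∀ i, 0 < ρ i := fun i => Real.sqrt_pos.mpr (ht0 i)
  have hρr : ∀ i, ρ i < r := fun i => (Real.sqrt_lt' hr0).mpr (htlt i)
  obtain ⟨lam, hlam⟩ := lagrange_extract n (by omega) t ht0 htinj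
  set C0 : ℝ := (∑ i, ‖lam i‖) * Real.sqrt (π * r^2) * Real.sqrt (1/w₀) / π with hC0def
  have hC0nonneg : 0 ≤ C0 := by
    apply div_nonneg _ Real.pi_pos.le
    positivity
  refine ⟨C0 + 1, by positivity, ?_⟩
  intro f hfPA hfI z₀ hz₀
  obtain ⟨g, hg, hgf⟩ := hfPA
  have hball : Metric.closedBall z₀ r ⊆ Ω :=
    (Metric.closedBall_subset_cthickening hz₀ r).trans hrΩ
  have hfc : ContinuousOn f Ω := by
    apply ContinuousOn.congr (s := Ω)
      (f := fun z => ∑ k ∈ Finset.range n, g k z * (starRingEnd ℂ z) ^ k)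
    · exact continuousOn_finset_sum _ fun k hk =>
        ((hg k (Finset.mem_range.mp hk)).continuousOn.mul
          ((Complex.continuous_conj.pow k).continuousOn))
    · exact hgf
  -- recentred decomposition
  set h : Fin n → ℂ → ℂ := fun j z => ∑ k ∈ Finset.range n,
    (if (j:ℕ) ≤ k then ((k.choose (j:ℕ) : ℂ) * (starRingEnd ℂ z₀) ^ (k - (j:ℕ))) else 0)
      * g k z with hhdef
  have hdiff : ∀ j, DifferentiableOn ℂ (h j) Ω := fun j =>
    DifferentiableOn.fun_sum fun k hk => (hg k (Finset.mem_range.mp hk)).const_mul _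
  have hdecomp : ∀ z ∈ Ω,
      ∑ j : Fin n, h j z * (starRingEnd ℂ) (z - z₀) ^ (j:ℕ) = f z := by
    intro z hz
    rw [hgf z hz]
    set X := (starRingEnd ℂ) (z - z₀) with hX
    set Y := (starRingEnd ℂ) z₀ with hY
    have hXY : (starRingEnd ℂ) z = X + Y := by rw [hX, hY, map_sub]; ring
    calc ∑ j : Fin n, h j z * X ^ (j:ℕ)
        = ∑ j ∈ Finset.range n, (∑ k ∈ Finset.range n,
            (if j ≤ k then ((k.choose j : ℂ) * Y ^ (k - j)) else 0) * g k z) * X ^ j := by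
          rw [← Fin.sum_univ_eq_sum_range]
      _ = ∑ j ∈ Finset.range n, ∑ k ∈ Finset.range n,
            (if j ≤ k then ((k.choose j : ℂ) * X ^ j * Y ^ (k - j)) * g k z else 0) := by
          apply Finset.sum_congr rfl; intro j _
          rw [Finset.sum_mul]
          apply Finset.sum_congr rfl; intro k _
          split_ifs with hjk <;> ring
      _ = ∑ k ∈ Finset.range n, ∑ j ∈ Finset.range n,
            (if j ≤ k then ((k.choose j : ℂ) * X ^ j * Y ^ (k - j)) * g k z else 0) :=
          Finset.sum_comm
      _ = ∑ k ∈ Finset.range n, g k z * (starRingEnd ℂ z) ^ k := by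
          apply Finset.sum_congr rfl; intro k hk
          have hfil : (Finset.range n).filter (fun j => j ≤ k) = Finset.range (k+1) := by
            ext j
            simp only [Finset.mem_filter, Finset.mem_range]
            constructor
            · rintro ⟨_, hj⟩; omega
            · intro hj
              have := Finset.mem_range.mp hk
              omega
          rw [← Finset.sum_filter, hfil, hXY, add_pow, Finset.mul_sum]
          apply Finset.sum_congr rfl; intro j _
          ring
  have hh0 : h ⟨0, by omega⟩ z₀ = f z₀ := by
    rw [hgf z₀ (hKΩ hz₀), hhdef]
    apply Finset.sum_congr rfl; intro k hk
    simp [mul_comm]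
  have hrNN : (0:NNReal) < r.toNNReal := Real.toNNReal_pos.mpr hr0
  have hrcoe : ((r.toNNReal : ℝ)) = r := Real.coe_toNNReal r hr0.le
  have H : ∀ j : Fin n, ∃ a : ℕ → ℂ, a 0 = h j z₀ ∧
      ∀ ρ' : ℝ, 0 < ρ' → ρ' < (r.toNNReal:ℝ) → ∀ m : ℕ,
      ∫ w in Metric.closedBall z₀ ρ', h j w * (starRingEnd ℂ) (w - z₀) ^ m =
        ((π * ρ'^(2*m+2)/(m+1) : ℝ) : ℂ) * a m := fun j =>
    integral_series (h j) z₀ r.toNNReal hrNN (by rw [hrcoe]; exact (hdiff j).mono hball)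
  choose A hA0 hAser using H
  set c : Fin n → ℂ := fun k => ((π / ((k:ℕ)+1) : ℝ) : ℂ) * A k (k:ℕ) with hcdef
  have hQ : ∀ i : Fin n, ∫ z in Metric.closedBall z₀ (ρ i), f z =
      ∑ k : Fin n, c k * ((t i : ℝ) : ℂ) ^ ((k:ℕ)+1) := by
    intro i
    have hsub : Metric.closedBall z₀ (ρ i) ⊆ Ω :=
      (Metric.closedBall_subset_closedBall (hρr i).le).trans hball
    have h1 : ∫ z in Metric.closedBall z₀ (ρ i), f z
        = ∫ z in Metric.closedBall z₀ (ρ i),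
            ∑ j : Fin n, h j z * (starRingEnd ℂ) (z - z₀) ^ (j:ℕ) := by
      apply MeasureTheory.setIntegral_congr_fun measurableSet_closedBall
      intro z hz
      exact (hdecomp z (hsub hz)).symm
    rw [h1, MeasureTheory.integral_finset_sum]
    · apply Finset.sum_congr rfl
      intro j _
      rw [hAser j (ρ i) (hρ0 i) (by rw [hrcoe]; exact hρr i) (j:ℕ)]
      have hpow : (ρ i)^(2*(j:ℕ)+2) = (t i)^((j:ℕ)+1) := by
        rw [show 2*(j:ℕ)+2 = 2*((j:ℕ)+1) by ring, pow_mul, hρdef, Real.sq_sqrt (ht0 i).le]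
      rw [hpow]
      simp only [hcdef]
      push_cast
      ring
    · intro j _
      apply ContinuousOn.integrableOn_compact (isCompact_closedBall _ _)
      exact ((hdiff j).continuousOn.mono hsub).mul
        (((Complex.continuous_conj.comp (continuous_id.sub continuous_const)).pow _).continuousOn)
  have hkey : (π : ℂ) * f z₀ = ∑ i : Fin n, lam i * ∫ z in Metric.closedBall z₀ (ρ i), f z := by
    have h1 := hlam c
    have h2 : c ⟨0, by omega⟩ = (π:ℂ) * f z₀ := by
      have e : c ⟨0, by omega⟩ = ((π / ((0:ℕ)+1) : ℝ) : ℂ) * A ⟨0, by omega⟩ 0 := rfl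
      rw [e, hA0, hh0]
      push_cast
      ring
    rw [← h2, h1]
    apply Finset.sum_congr rfl; intro i _
    rw [hQ i]
  set I : ℝ := ∫ z in Ω, ‖f z‖ ^ 2 * W z ∂volume with hIdef
  have hInonneg : 0 ≤ I := by
    apply MeasureTheory.setIntegral_nonneg hΩ.measurableSet
    intro z hz
    exact mul_nonneg (sq_nonneg _) (hWpos z hz).le
  have hfcB : ContinuousOn f (Metric.closedBall z₀ r) := hfc.mono hball
  have hf2int : IntegrableOn (fun z => ‖f z‖^2) (Metric.closedBall z₀ r) volume :=
    ((hfcB.norm).pow 2).integrableOn_compact (isCompact_closedBall _ _)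
  have hfWint : IntegrableOn (fun z => ‖f z‖^2 * W z)
      (Metric.closedBall z₀ r) volume := hfI.mono_set hball
  have hstep1 : ∫ z in Metric.closedBall z₀ r, ‖f z‖^2 ≤
      (1/w₀) * ∫ z in Metric.closedBall z₀ r, ‖f z‖^2 * W z := by
    rw [← MeasureTheory.integral_const_mul]
    apply MeasureTheory.setIntegral_mono_on hf2int (hfWint.const_mul _) measurableSet_closedBall
    intro z hz
    have hzK' : z ∈ K' := Metric.closedBall_subset_cthickening hz₀ r hz
    have hwz : w₀ ≤ W z := hzmin hzK'
    have habs : ‖f z‖ = ‖f z‖ := rfl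
    rw [habs]
    have h4 : ‖f z‖^2 * w₀ ≤ ‖f z‖^2 * W z :=
      mul_le_mul_of_nonneg_left hwz (sq_nonneg _)
    calc ‖f z‖^2 = (1/w₀) * (‖f z‖^2 * w₀) := by field_simp
      _ ≤ (1/w₀) * (‖f z‖^2 * W z) :=
          mul_le_mul_of_nonneg_left h4 (by positivity)
  have hstep2 : ∫ z in Metric.closedBall z₀ r, ‖f z‖^2 * W z ≤ I := by
    apply MeasureTheory.setIntegral_mono_set hfI
    · filter_upwards [MeasureTheory.ae_restrict_mem hΩ.measurableSet] with z hz
      exact mul_nonneg (sq_nonneg _) (hWpos z hz).le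
    · exact HasSubset.Subset.eventuallyLE hball
  have hCS : ∫ z in Metric.closedBall z₀ r, ‖f z‖ ≤
      Real.sqrt (π * r^2) * Real.sqrt (∫ z in Metric.closedBall z₀ r, ‖f z‖^2) := by
    haveI : IsFiniteMeasure (volume.restrict (Metric.closedBall z₀ r)) :=
      ⟨by rw [Measure.restrict_apply_univ]; exact measure_closedBall_lt_top⟩
    obtain ⟨M, hM⟩ := (isCompact_closedBall z₀ r).exists_bound_of_continuousOn hfcB
    have hpq : Real.HolderConjugate 2 2 := Real.HolderConjugate.two_two
    have hmf : MemLp (fun z => ‖f z‖) (ENNReal.ofReal 2)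
        (volume.restrict (Metric.closedBall z₀ r)) := by
      apply MemLp.of_bound (hfcB.norm.aestronglyMeasurable measurableSet_closedBall) M
      filter_upwards [MeasureTheory.ae_restrict_mem measurableSet_closedBall] with z hz
      simpa using hM z hz
    have hm1 : MemLp (fun _ : ℂ => (1:ℝ)) (ENNReal.ofReal 2)
        (volume.restrict (Metric.closedBall z₀ r)) := memLp_const 1
    have key := MeasureTheory.integral_mul_le_Lp_mul_Lq_of_nonneg hpq
      (Filter.Eventually.of_forall fun z => norm_nonneg (f z))
      (Filter.Eventually.of_forall fun _ => zero_le_one) hmf hm1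
    simp only [mul_one] at key
    have e1 : ∫ z in Metric.closedBall z₀ r, ‖f z‖^(2:ℝ)
        = ∫ z in Metric.closedBall z₀ r, ‖f z‖^2 := by
      apply MeasureTheory.integral_congr_ae
      filter_upwards with z
      rw [show (2:ℝ) = ((2:ℕ):ℝ) by norm_num, Real.rpow_natCast]
    have e2 : ∫ _z in Metric.closedBall z₀ r, (1:ℝ)^(2:ℝ) = π * r^2 := by
      simp only [Real.one_rpow]
      rw [MeasureTheory.setIntegral_const, measureReal_def, Complex.volume_closedBall, smul_eq_mul, mul_one]
      rw [ENNReal.toReal_mul, ENNReal.toReal_pow, ENNReal.toReal_ofReal hr0.le,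
        ENNReal.coe_toReal, NNReal.coe_real_pi]
      ring
    rw [e1, e2] at key
    calc ∫ z in Metric.closedBall z₀ r, ‖f z‖ ≤
        (∫ z in Metric.closedBall z₀ r, ‖f z‖^2) ^ (1/(2:ℝ)) * (π * r^2) ^ (1/(2:ℝ)) := key
      _ = Real.sqrt (π * r^2) * Real.sqrt (∫ z in Metric.closedBall z₀ r, ‖f z‖^2) := by
          rw [← Real.sqrt_eq_rpow, ← Real.sqrt_eq_rpow]
          ring
  have hQbound : ∀ i : Fin n, ‖∫ z in Metric.closedBall z₀ (ρ i), f z‖ ≤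
      Real.sqrt (π * r^2) * Real.sqrt (1/w₀) * Real.sqrt I := by
    intro i
    have b1 : ‖∫ z in Metric.closedBall z₀ (ρ i), f z‖ ≤
        ∫ z in Metric.closedBall z₀ (ρ i), ‖f z‖ :=
      MeasureTheory.norm_integral_le_integral_norm _
    have b2 : ∫ z in Metric.closedBall z₀ (ρ i), ‖f z‖
        ≤ ∫ z in Metric.closedBall z₀ r, ‖f z‖ :=
      MeasureTheory.setIntegral_mono_set
        (hfcB.norm.integrableOn_compact (isCompact_closedBall _ _))
        (Filter.Eventually.of_forall fun z => norm_nonneg (f z))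
        (HasSubset.Subset.eventuallyLE (Metric.closedBall_subset_closedBall (hρr i).le))
    have b3 : ∫ z in Metric.closedBall z₀ r, ‖f z‖^2 ≤ (1/w₀) * I :=
      le_trans hstep1 (mul_le_mul_of_nonneg_left hstep2 (by positivity))
    have b4 : Real.sqrt (∫ z in Metric.closedBall z₀ r, ‖f z‖^2)
        ≤ Real.sqrt (1/w₀) * Real.sqrt I := by
      rw [← Real.sqrt_mul (by positivity) I]
      exact Real.sqrt_le_sqrt b3
    calc ‖∫ z in Metric.closedBall z₀ (ρ i), f z‖
        ≤ ∫ z in Metric.closedBall z₀ r, ‖f z‖ := le_trans b1 b2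
      _ ≤ Real.sqrt (π * r^2) * Real.sqrt (∫ z in Metric.closedBall z₀ r, ‖f z‖^2) := hCS
      _ ≤ Real.sqrt (π * r^2) * (Real.sqrt (1/w₀) * Real.sqrt I) :=
          mul_le_mul_of_nonneg_left b4 (Real.sqrt_nonneg _)
      _ = Real.sqrt (π * r^2) * Real.sqrt (1/w₀) * Real.sqrt I := by ring
  have hfinal : π * ‖f z₀‖ ≤
      (∑ i, ‖lam i‖) * (Real.sqrt (π*r^2) * Real.sqrt (1/w₀) * Real.sqrt I) := by
    have h5 : π * ‖f z₀‖ = ‖(π:ℂ) * f z₀‖ := by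
      rw [norm_mul, Complex.norm_real, Real.norm_eq_abs, abs_of_pos Real.pi_pos]
    rw [h5, hkey]
    calc ‖∑ i : Fin n, lam i * ∫ z in Metric.closedBall z₀ (ρ i), f z‖
        ≤ ∑ i : Fin n, ‖lam i * ∫ z in Metric.closedBall z₀ (ρ i), f z‖ := norm_sum_le _ _
      _ = ∑ i : Fin n, ‖lam i‖ * ‖∫ z in Metric.closedBall z₀ (ρ i), f z‖ := by
          simp [norm_mul]
      _ ≤ ∑ i : Fin n, ‖lam i‖ * (Real.sqrt (π*r^2) * Real.sqrt (1/w₀) * Real.sqrt I) :=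
          Finset.sum_le_sum fun i _ =>
            mul_le_mul_of_nonneg_left (hQbound i) (norm_nonneg _)
      _ = (∑ i, ‖lam i‖) * (Real.sqrt (π*r^2) * Real.sqrt (1/w₀) * Real.sqrt I) := by
          rw [← Finset.sum_mul]
  have hC0bound : ‖f z₀‖ ≤ C0 * Real.sqrt I := by
    rw [hC0def, div_mul_eq_mul_div, le_div_iff₀ Real.pi_pos]
    calc ‖f z₀‖ * π = π * ‖f z₀‖ := by ring
      _ ≤ (∑ i, ‖lam i‖) * (Real.sqrt (π*r^2) * Real.sqrt (1/w₀) * Real.sqrt I) := hfinal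
      _ = (∑ i, ‖lam i‖) * Real.sqrt (π*r^2) * Real.sqrt (1/w₀) * Real.sqrt I := by ring
  calc ‖f z₀‖ ≤ C0 * Real.sqrt I := hC0bound
    _ ≤ (C0+1) * Real.sqrt I :=
        mul_le_mul_of_nonneg_right (by linarith) (Real.sqrt_nonneg _)

end PolyAnalyticProof
end
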